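/- arXiv:1706.00663 — 6 statements merged into one kernel-verified Lean document; each statement's English description precedes it below -/
import Mathlib

section
/- Let X be a complex Banach space, T a bounded linear operator on X, and λ an eigenvalue of T such that T − λI is a Browder operator with ascent p, i.e., T − λI has closed range, dim ker(T − λI) = dim ker(T* − λI) < ∞, and ker((T − λI)^p) = ker((T − λI)^{p+1}) as well as range((T − λI)^p) = range((T − λI)^{p+1}). Then X decomposes as the direct sum X = ker((T − λI)^p) ⊕ range((T − λI)^p); moreover, the operator P = Φ(Φ*Φ)^{-1}Φ* built from bases of the generalized eigenspaces is a continuous projection with range(P) = ker((T − λI)^p) and ker(P) = range((T − λI)^p). -/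
set_option synthInstance.maxHeartbeats 1000000
set_option maxHeartbeats 2000000

/-- The dual (transpose) operator `T* : X* → X*`, `T* f = f ∘ T`, of a bounded operator `T`
on a normed space `X`. -/
noncomputable def dualOp {X : Type*} [NormedAddCommGroup X] [NormedSpace ℂ X]
    (T : X →L[ℂ] X) : StrongDual ℂ X →L[ℂ] StrongDual ℂ X :=
  (ContinuousLinearMap.compL ℂ X X ℂ).flip T

/-- **space decomposition.** If `λ` is an eigenvalue of `T` such that
`T - λI` is a Browder operator with ascent `p`, then
`X = ker (T - λI)^p ⊕ range (T - λI)^p`; moreover the Gram matrix `G` built from bases of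
the generalized eigenspaces of `T` and `T*` is invertible and
`P = Φ (Φ*Φ)⁻¹ Φ*` is a continuous projection with range `ker (T - λI)^p` and kernel
`range (T - λI)^p`. -/
theorem browder_space_decomposition
    {X : Type*} [NormedAddCommGroup X] [NormedSpace ℂ X] [CompleteSpace X]
    (T : X →L[ℂ] X) (l : ℂ) (p n : ℕ) (hp : 0 < p)
    (heig : LinearMap.ker ((T - l • 1 : X →L[ℂ] X) : X →ₗ[ℂ] X) ≠ ⊥)
    (hclosed : IsClosed (LinearMap.range ((T - l • 1 : X →L[ℂ] X) : X →ₗ[ℂ] X) : Set X))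
    (hfin : FiniteDimensional ℂ (LinearMap.ker ((T - l • 1 : X →L[ℂ] X) : X →ₗ[ℂ] X)))
    (hfin' : FiniteDimensional ℂ (LinearMap.ker ((dualOp T - l • 1 : StrongDual ℂ X →L[ℂ] StrongDual ℂ X) :
        StrongDual ℂ X →ₗ[ℂ] StrongDual ℂ X)))
    (hdim : Module.finrank ℂ (LinearMap.ker ((T - l • 1 : X →L[ℂ] X) : X →ₗ[ℂ] X)) =
      Module.finrank ℂ (LinearMap.ker ((dualOp T - l • 1 : StrongDual ℂ X →L[ℂ] StrongDual ℂ X) :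
        StrongDual ℂ X →ₗ[ℂ] StrongDual ℂ X)))
    (hasc : LinearMap.ker (((T - l • 1) ^ p : X →L[ℂ] X) : X →ₗ[ℂ] X) = LinearMap.ker (((T - l • 1) ^ (p + 1) : X →L[ℂ] X) : X →ₗ[ℂ] X))
    (hdesc : LinearMap.range (((T - l • 1) ^ p : X →L[ℂ] X) : X →ₗ[ℂ] X) = LinearMap.range (((T - l • 1) ^ (p + 1) : X →L[ℂ] X) : X →ₗ[ℂ] X))
    (e : Module.Basis (Fin n) ℂ (LinearMap.ker (((T - l • 1) ^ p : X →L[ℂ] X) : X →ₗ[ℂ] X)))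
    (estar : Module.Basis (Fin n) ℂ (LinearMap.ker (((dualOp T - l • 1) ^ p :
      StrongDual ℂ X →L[ℂ] StrongDual ℂ X) : StrongDual ℂ X →ₗ[ℂ] StrongDual ℂ X)))
    (G : Matrix (Fin n) (Fin n) ℂ)
    (hG : G = Matrix.of fun j i => (estar j : StrongDual ℂ X) (e i : X))
    (P : X →L[ℂ] X)
    (hP : P = ∑ i : Fin n, ∑ j : Fin n,
      (G⁻¹ i j) • ((estar j : StrongDual ℂ X).smulRight (e i : X))) :
    IsCompl (LinearMap.ker (((T - l • 1) ^ p : X →L[ℂ] X) : X →ₗ[ℂ] X)) (LinearMap.range (((T - l • 1) ^ p : X →L[ℂ] X) : X →ₗ[ℂ] X)) ∧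
    IsUnit G ∧
    P ∘L P = P ∧
    LinearMap.range (P : X →ₗ[ℂ] X) = LinearMap.ker (((T - l • 1) ^ p : X →L[ℂ] X) : X →ₗ[ℂ] X) ∧
    LinearMap.ker (P : X →ₗ[ℂ] X) = LinearMap.range (((T - l • 1) ^ p : X →L[ℂ] X) : X →ₗ[ℂ] X) := by
  clear heig hclosed hfin hfin' hdim hasc hp
  -- power application lemmas
  have hpow_succ : ∀ (m : ℕ) (y : X), ((T - l • 1) ^ (m + 1)) y = ((T - l • 1) ^ m) ((T - l • 1) y) := by
    intro m y; rw [pow_succ]; rfl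
  have hpow_succ' : ∀ (m : ℕ) (y : X), ((T - l • 1) ^ (m + 1)) y = (T - l • 1) (((T - l • 1) ^ m) y) := by
    intro m y; rw [pow_succ']; rfl
  have hpow_add : ∀ (a b : ℕ) (y : X), ((T - l • 1) ^ (a + b)) y = ((T - l • 1) ^ a) (((T - l • 1) ^ b) y) := by
    intro a b y; rw [pow_add]; rfl
  -- ranges stabilize
  have hrange : ∀ k : ℕ, LinearMap.range (((T - l • 1) ^ (p + k) : X →L[ℂ] X) : X →ₗ[ℂ] X) = LinearMap.range (((T - l • 1) ^ p : X →L[ℂ] X) : X →ₗ[ℂ] X) := by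
    intro k
    induction k with
    | zero => rfl
    | succ k ih =>
      apply le_antisymm
      · rintro x ⟨y, rfl⟩
        have h1 : ((T - l • 1) ^ (p + k)) ((T - l • 1) y) ∈ LinearMap.range (((T - l • 1) ^ (p + k) : X →L[ℂ] X) : X →ₗ[ℂ] X) := ⟨(T - l • 1) y, rfl⟩
        rw [ih] at h1
        have h2 : ((T - l • 1) ^ (p + (k + 1))) y = ((T - l • 1) ^ (p + k)) ((T - l • 1) y) := hpow_succ _ _
        rw [ContinuousLinearMap.coe_coe, h2]; exact h1
      · rintro x ⟨y, rfl⟩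
        have h1 : ((T - l • 1) ^ p) y ∈ LinearMap.range (((T - l • 1) ^ (p + 1) : X →L[ℂ] X) : X →ₗ[ℂ] X) := by
          rw [← hdesc]; exact ⟨y, rfl⟩
        obtain ⟨z, hz⟩ := h1
        have h2 : ((T - l • 1) ^ p) z ∈ LinearMap.range (((T - l • 1) ^ (p + k) : X →L[ℂ] X) : X →ₗ[ℂ] X) := by rw [ih]; exact ⟨z, rfl⟩
        obtain ⟨w, hw⟩ := h2
        refine ⟨w, ?_⟩
        calc ((T - l • 1) ^ (p + (k + 1))) w = (T - l • 1) (((T - l • 1) ^ (p + k)) w) := hpow_succ' _ _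
          _ = (T - l • 1) (((T - l • 1) ^ p) z) := by rw [ContinuousLinearMap.coe_coe] at hw; rw [hw]
          _ = ((T - l • 1) ^ (p + 1)) z := (hpow_succ' _ _).symm
          _ = ((T - l • 1) ^ p) y := hz
  -- decomposition X = ker + range
  have hdecomp : ∀ x : X, ∃ u ∈ LinearMap.ker (((T - l • 1) ^ p : X →L[ℂ] X) : X →ₗ[ℂ] X), ∃ v : X, x = u + ((T - l • 1) ^ p) v := by
    intro x
    have h1 : ((T - l • 1) ^ p) x ∈ LinearMap.range (((T - l • 1) ^ (p + p) : X →L[ℂ] X) : X →ₗ[ℂ] X) := by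
      rw [hrange p]; exact ⟨x, rfl⟩
    obtain ⟨y, hy⟩ := h1
    refine ⟨x - ((T - l • 1) ^ p) y, ?_, y, by abel⟩
    rw [ContinuousLinearMap.coe_coe] at hy
    rw [LinearMap.mem_ker, map_sub, ContinuousLinearMap.coe_coe, ← hpow_add, hy, sub_self]
  -- dual operator powers act by composition
  have hdual : ∀ (k : ℕ) (f : StrongDual ℂ X) (x : X),
      (((dualOp T - l • 1) ^ k) f) x = f (((T - l • 1) ^ k) x) := by
    intro k
    induction k with
    | zero => intro f x; simp
    | succ k ih =>
      intro f x
      have h1 : ((dualOp T - l • 1) ^ (k + 1)) f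
          = ((dualOp T - l • 1) ^ k) ((dualOp T - l • 1) f) := by
        rw [pow_succ]; rfl
      rw [h1, ih]
      have h2 : ((dualOp T - l • 1) f) (((T - l • 1) ^ k) x) = f ((T - l • 1) (((T - l • 1) ^ k) x)) := by
        simp [dualOp]
      rw [h2, ← hpow_succ']
  -- estar j vanishes on range ((T - l • 1)^p)
  have hstar_range : ∀ (j : Fin n) (x : X),
      (estar j : StrongDual ℂ X) (((T - l • 1) ^ p) x) = 0 := by
    intro j x
    have h1 := (estar j).2
    rw [LinearMap.mem_ker, ContinuousLinearMap.coe_coe] at h1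
    have h2 := hdual p (estar j : StrongDual ℂ X) x
    rw [h1] at h2
    simpa using h2.symm
  -- representation of elements of ker ((T - l • 1)^p)
  have hrep : ∀ (v : X) (hv : v ∈ LinearMap.ker (((T - l • 1) ^ p : X →L[ℂ] X) : X →ₗ[ℂ] X)),
      v = ∑ i, (e.repr ⟨v, hv⟩ i) • ((e i : X)) := by
    intro v hv
    have h := congrArg (Subtype.val) (e.sum_repr ⟨v, hv⟩).symm
    simp only [Submodule.coe_sum, Submodule.coe_smul] at h
    exact h
  -- linear independence of coerced bases
  have hLI : LinearIndependent ℂ (fun i => ((e i : X))) :=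
    e.linearIndependent.map' (LinearMap.ker (((T - l • 1) ^ p : X →L[ℂ] X) : X →ₗ[ℂ] X)).subtype
      (Submodule.ker_subtype _)
  have hLI' : LinearIndependent ℂ
      (fun j => ((estar j : StrongDual ℂ X))) :=
    estar.linearIndependent.map_injOn
      (LinearMap.ker (((dualOp T - l • 1) ^ p : StrongDual ℂ X →L[ℂ] StrongDual ℂ X) : StrongDual ℂ X →ₗ[ℂ] StrongDual ℂ X)).subtype Subtype.val_injective.injOn
  -- evaluation formula
  have heval : ∀ (v : X) (hv : v ∈ LinearMap.ker (((T - l • 1) ^ p : X →L[ℂ] X) : X →ₗ[ℂ] X)) (j : Fin n),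
      (estar j : StrongDual ℂ X) v = ∑ i, G j i * e.repr ⟨v, hv⟩ i := by
    intro v hv j
    conv_lhs => rw [hrep v hv]
    rw [map_sum]
    refine Finset.sum_congr rfl fun i _ => ?_
    rw [map_smul, smul_eq_mul, hG, Matrix.of_apply, mul_comm]
  -- the Gram matrix is invertible
  have hkey : ∀ c : Fin n → ℂ, Matrix.vecMul c G = 0 → c = 0 := by
    intro c hc
    set w : StrongDual ℂ X := ∑ j, c j • (estar j : StrongDual ℂ X) with hw
    have hw_e : ∀ i : Fin n, w ((e i : X)) = 0 := by
      intro i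
      have h1 : w ((e i : X)) = ∑ j, c j * G j i := by
        rw [hw]
        simp [ContinuousLinearMap.sum_apply, hG]
      rw [h1]
      have h2 := congrFun hc i
      simpa [Matrix.vecMul, dotProduct] using h2
    have hw_ker : ∀ (v : X), v ∈ LinearMap.ker (((T - l • 1) ^ p : X →L[ℂ] X) : X →ₗ[ℂ] X) → w v = 0 := by
      intro v hv
      conv_lhs => rw [hrep v hv]
      rw [map_sum]
      refine Finset.sum_eq_zero fun i _ => ?_
      rw [map_smul, hw_e i, smul_zero]
    have hw_range : ∀ x : X, w (((T - l • 1) ^ p) x) = 0 := by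
      intro x
      rw [hw]
      simp only [ContinuousLinearMap.sum_apply, ContinuousLinearMap.smul_apply, hstar_range, smul_zero, Finset.sum_const_zero]
    have hw0 : w = 0 := by
      ext x
      obtain ⟨u, hu, v, rfl⟩ := hdecomp x
      rw [map_add, hw_ker u hu, hw_range v, add_zero]
      rfl
    have h3 := Fintype.linearIndependent_iff.mp hLI' c (by rw [← hw]; exact hw0)
    funext i; exact h3 i
  have hGunit : IsUnit G := by
    rw [← Matrix.vecMul_injective_iff_isUnit]
    intro c d hcd
    have hcd' : Matrix.vecMul c G = Matrix.vecMul d G := hcd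
    have h0 : Matrix.vecMul (c - d) G = 0 := by
      rw [Matrix.sub_vecMul, hcd', sub_self]
    have h1 := hkey (c - d) h0
    exact sub_eq_zero.mp h1
  have hdet : IsUnit G.det := (Matrix.isUnit_iff_isUnit_det G).mp hGunit
  have hGinv1 : G⁻¹ * G = 1 := Matrix.nonsing_inv_mul G hdet
  have hGinv2 : G * G⁻¹ = 1 := Matrix.mul_nonsing_inv G hdet
  -- nondegeneracy on the kernel side
  have hv0 : ∀ (v : X) (hv : v ∈ LinearMap.ker (((T - l • 1) ^ p : X →L[ℂ] X) : X →ₗ[ℂ] X)),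
      (∀ j, (estar j : StrongDual ℂ X) v = 0) → v = 0 := by
    intro v hv h0
    have hc : G.mulVec (fun i => e.repr ⟨v, hv⟩ i) = 0 := by
      funext j
      have h1 : (G.mulVec fun i => e.repr ⟨v, hv⟩ i) j = ∑ i, G j i * e.repr ⟨v, hv⟩ i := by
        simp [Matrix.mulVec, dotProduct]
      rw [h1, ← heval v hv j, h0 j]
      rfl
    have hc2 : (fun i => e.repr ⟨v, hv⟩ i) = 0 := by
      have h2 := congrArg (fun u => G⁻¹.mulVec u) hc
      simpa [Matrix.mulVec_mulVec, hGinv1, Matrix.one_mulVec, Matrix.mulVec_zero] using h2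
    rw [hrep v hv]
    refine Finset.sum_eq_zero fun i _ => ?_
    rw [show e.repr ⟨v, hv⟩ i = 0 from congrFun hc2 i, zero_smul]
  -- the formula for P
  have hPapp : ∀ x : X, P x
      = ∑ i, (∑ j, G⁻¹ i j * (estar j : StrongDual ℂ X) x) • ((e i : X)) := by
    intro x
    rw [hP, ContinuousLinearMap.sum_apply]
    refine Finset.sum_congr rfl fun i _ => ?_
    rw [ContinuousLinearMap.sum_apply, Finset.sum_smul]
    refine Finset.sum_congr rfl fun j _ => ?_
    rw [ContinuousLinearMap.smul_apply, ContinuousLinearMap.smulRight_apply, smul_smul]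
  have hPmem : ∀ x : X, P x ∈ LinearMap.ker (((T - l • 1) ^ p : X →L[ℂ] X) : X →ₗ[ℂ] X) := by
    intro x
    rw [hPapp]
    exact Submodule.sum_mem _ fun i _ => Submodule.smul_mem _ _ (e i).2
  have hPfix : ∀ (v : X) (hv : v ∈ LinearMap.ker (((T - l • 1) ^ p : X →L[ℂ] X) : X →ₗ[ℂ] X)), P v = v := by
    intro v hv
    rw [hPapp]
    conv_rhs => rw [hrep v hv]
    refine Finset.sum_congr rfl fun i _ => ?_
    congr 1
    have h1 : ∀ j, (estar j : StrongDual ℂ X) v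
        = (G.mulVec fun k => e.repr ⟨v, hv⟩ k) j := by
      intro j
      rw [heval v hv j]
      simp [Matrix.mulVec, dotProduct]
    calc ∑ j, G⁻¹ i j * (estar j : StrongDual ℂ X) v
        = (G⁻¹.mulVec (G.mulVec fun k => e.repr ⟨v, hv⟩ k)) i := by
          simp only [h1]
          simp [Matrix.mulVec, dotProduct]
      _ = e.repr ⟨v, hv⟩ i := by
          rw [Matrix.mulVec_mulVec, hGinv1, Matrix.one_mulVec]
  have hPzero : ∀ x : X, (∀ j, (estar j : StrongDual ℂ X) x = 0) → P x = 0 := by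
    intro x h0
    rw [hPapp]
    refine Finset.sum_eq_zero fun i _ => ?_
    simp [h0]
  have hPker0 : ∀ x : X, P x = 0 → ∀ j, (estar j : StrongDual ℂ X) x = 0 := by
    intro x h0
    set u : Fin n → ℂ := fun j => (estar j : StrongDual ℂ X) x with hu
    have hd : ∀ i, (∑ j, G⁻¹ i j * u j) = 0 := by
      have h1 := Fintype.linearIndependent_iff.mp hLI
        (fun i => ∑ j, G⁻¹ i j * u j) (by rw [← hPapp x]; exact h0)
      exact h1
    have h2 : G⁻¹.mulVec u = 0 := by
      funext i
      have h3 : (G⁻¹.mulVec u) i = ∑ j, G⁻¹ i j * u j := by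
        simp [Matrix.mulVec, dotProduct]
      rw [h3, hd i]
      rfl
    have h4 : u = 0 := by
      have h5 := congrArg (fun z => G.mulVec z) h2
      simpa [Matrix.mulVec_mulVec, hGinv2, Matrix.one_mulVec, Matrix.mulVec_zero] using h5
    intro j
    exact congrFun h4 j
  -- assemble the conclusions
  refine ⟨⟨?_, ?_⟩, hGunit, ?_, ?_, ?_⟩
  · rw [Submodule.disjoint_def]
    intro x hx hx'
    obtain ⟨y, hy⟩ := hx'
    refine hv0 x hx fun j => ?_
    rw [← hy]
    exact hstar_range j y
  · rw [codisjoint_iff, eq_top_iff]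
    intro x _
    obtain ⟨u, hu, v, rfl⟩ := hdecomp x
    exact Submodule.add_mem_sup hu ⟨v, rfl⟩
  · ext x
    rw [ContinuousLinearMap.comp_apply]
    exact hPfix (P x) (hPmem x)
  · apply le_antisymm
    · rintro x ⟨y, rfl⟩
      exact hPmem y
    · intro v hv
      exact ⟨v, hPfix v hv⟩
  · apply le_antisymm
    · intro x hx
      rw [LinearMap.mem_ker] at hx
      obtain ⟨u, hu, v, huv⟩ := hdecomp x
      have h0 : ∀ j, (estar j : StrongDual ℂ X) x = 0 := hPker0 x hx
      have hu0 : ∀ j, (estar j : StrongDual ℂ X) u = 0 := by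
        intro j
        have h1 := h0 j
        rw [huv, map_add, hstar_range j v, add_zero] at h1
        exact h1
      have h2 : u = 0 := hv0 u hu hu0
      rw [huv, h2, zero_add]
      exact ⟨v, rfl⟩
    · rintro x ⟨y, rfl⟩
      rw [LinearMap.mem_ker]
      exact hPzero _ fun j => hstar_range j y
end

section
/- Let X be a complex Banach space, T a bounded linear operator on X, λ ∈ ℂ, and p a positive integer. Assume (T − λI)^p has closed range and 0 < dim ker((T − λI)^p) = n ≤ m = dim ker((T* − λI)^p) < ∞ (i.e., T − λI is Fredholm of index ≤ 0). Then the m×n Gram matrix G with entries G_{ji} = e*_j(e_i), built from a basis (e_1,…,e_n) of ker((T − λI)^p) and a basis (e*_1,…,e*_m) of ker((T* − λI)^p), is a square invertible matrix if and only if T − λI is a Browder operator with ascent at most p, i.e., in addition n = m, ker((T − λI)^p) = ker((T − λI)^{p+1}) and range((T − λI)^p) = range((T − λI)^{p+1}). -/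
set_option synthInstance.maxHeartbeats 1000000
set_option maxHeartbeats 1000000

section Aux

variable {X : Type*} [NormedAddCommGroup X] [NormedSpace ℂ X]

lemma dualOp_pow_apply (T : X →L[ℂ] X) (l : ℂ) (k : ℕ) (f : StrongDual ℂ X) :
    ((dualOp T - l • 1) ^ k) f = f.comp ((T - l • 1) ^ k) := by
  induction k generalizing f with
  | zero => ext x; simp
  | succ k ih =>
    rw [pow_succ, pow_succ']
    have h1 : (dualOp T - l • 1) f = f.comp (T - l • 1) := by
      ext x; simp [dualOp, ContinuousLinearMap.compL]
    calc ((dualOp T - l • 1) ^ k * (dualOp T - l • 1)) f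
        = ((dualOp T - l • 1) ^ k) (f.comp (T - l • 1)) := by
          rw [ContinuousLinearMap.mul_apply, h1]
      _ = (f.comp (T - l • 1)).comp ((T - l • 1) ^ k) := ih _
      _ = f.comp ((T - l • 1) * (T - l • 1) ^ k) := by rfl

lemma mem_ker_dual_iff (T : X →L[ℂ] X) (l : ℂ) (k : ℕ) (f : StrongDual ℂ X) :
    f ∈ LinearMap.ker (((dualOp T - l • 1) ^ k : StrongDual ℂ X →L[ℂ] StrongDual ℂ X) : StrongDual ℂ X →ₗ[ℂ] StrongDual ℂ X) ↔ ∀ x, f (((T - l • 1) ^ k) x) = 0 := by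
  rw [LinearMap.mem_ker, ContinuousLinearMap.coe_coe, dualOp_pow_apply]
  constructor
  · intro h x
    have := DFunLike.congr_fun h x
    simpa using this
  · intro h; ext x; simpa using h x

/-- continuous quotient map -/
noncomputable def mkQL (M : Submodule ℂ X) : X →L[ℂ] X ⧸ M :=
  ⟨M.mkQ, continuous_quot_mk⟩

lemma sep_of_closed (M : Submodule ℂ X) (hM : IsClosed (M : Set X)) (x : X) (hx : x ∉ M) :
    ∃ f : StrongDual ℂ X, (∀ y ∈ M, f y = 0) ∧ f x ≠ 0 := by
  haveI : IsClosed (M : Set X) := hM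
  have hx' : mkQL M x ≠ 0 := by
    change M.mkQ x ≠ 0
    simpa [mkQL, Submodule.Quotient.mk_eq_zero] using hx
  obtain ⟨g, -, hg⟩ := exists_dual_vector ℂ (mkQL M x) (norm_ne_zero_iff.mpr hx')
  refine ⟨g.comp (mkQL M), fun y hy => ?_, ?_⟩
  · have : mkQL M y = 0 := by change M.mkQ y = 0; simpa [mkQL, Submodule.Quotient.mk_eq_zero] using hy
    simp [this]
  · simp only [ContinuousLinearMap.comp_apply, hg, ne_eq, RCLike.ofReal_eq_zero, norm_eq_zero]
    exact hx'

lemma isClosed_fin_sup (N' M : Submodule ℂ X) [FiniteDimensional ℂ N']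
    (hM : IsClosed (M : Set X)) : IsClosed ((N' ⊔ M : Submodule ℂ X) : Set X) := by
  haveI : IsClosed (M : Set X) := hM
  have himg : IsClosed ((N'.map M.mkQ : Submodule ℂ (X ⧸ M)) : Set (X ⧸ M)) :=
    Submodule.closed_of_finiteDimensional _
  have heq : (N' ⊔ M : Submodule ℂ X) = (N'.map M.mkQ).comap M.mkQ := by
    rw [Submodule.comap_map_eq, Submodule.ker_mkQ]
  rw [heq]
  exact himg.preimage (mkQL M).continuous

lemma ker_pow_stable (S : X →L[ℂ] X) (p : ℕ)
    (h : LinearMap.ker ((S ^ p : X →L[ℂ] X) : X →ₗ[ℂ] X) = LinearMap.ker ((S ^ (p + 1) : X →L[ℂ] X) : X →ₗ[ℂ] X)) (k : ℕ) :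
    LinearMap.ker ((S ^ (p + k) : X →L[ℂ] X) : X →ₗ[ℂ] X) = LinearMap.ker ((S ^ p : X →L[ℂ] X) : X →ₗ[ℂ] X) := by
  induction k with
  | zero => rfl
  | succ k ih =>
    apply le_antisymm
    · intro x hx
      have hSx : S x ∈ LinearMap.ker ((S ^ (p + k) : X →L[ℂ] X) : X →ₗ[ℂ] X) := by
        rw [LinearMap.mem_ker, ContinuousLinearMap.coe_coe] at hx ⊢
        have : (S ^ (p + k)) (S x) = (S ^ (p + k + 1)) x := by
          rw [pow_succ, ContinuousLinearMap.mul_apply]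
        rw [this]; exact hx
      rw [ih] at hSx
      have : x ∈ LinearMap.ker ((S ^ (p + 1) : X →L[ℂ] X) : X →ₗ[ℂ] X) := by
        rw [LinearMap.mem_ker, ContinuousLinearMap.coe_coe] at hSx ⊢
        rw [pow_succ, ContinuousLinearMap.mul_apply]; exact hSx
      rwa [← h] at this
    · intro x hx
      rw [LinearMap.mem_ker, ContinuousLinearMap.coe_coe] at hx ⊢
      have : (S ^ (p + (k + 1))) x = (S ^ (k + 1)) ((S ^ p) x) := by
        rw [add_comm p (k + 1), pow_add, ContinuousLinearMap.mul_apply]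
      rw [this, hx, map_zero]

lemma pow_add_apply' (S : X →L[ℂ] X) (a b : ℕ) (x : X) :
    (S ^ (a + b)) x = (S ^ a) ((S ^ b) x) := by
  rw [pow_add, ContinuousLinearMap.mul_apply]

end Aux

lemma rank_eq_iff_ker {k m' : ℕ} (M : Matrix (Fin m') (Fin k) ℂ) :
    M.rank = k ↔ LinearMap.ker M.mulVecLin = ⊥ := by
  have hrn := LinearMap.finrank_range_add_finrank_ker M.mulVecLin
  rw [Module.finrank_fin_fun] at hrn
  unfold Matrix.rank
  constructor
  · intro h
    have : Module.finrank ℂ (LinearMap.ker M.mulVecLin) = 0 := by omega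
    exact Submodule.finrank_eq_zero.mp this
  · intro h
    rw [h, finrank_bot] at hrn
    omega

/-- Suppose `(T - λI)^p` has closed range and
`0 < dim ker (T - λI)^p = n ≤ m = dim ker (T* - λI)^p < ∞`.  Then the `m × n` Gram matrix
`G` (built from bases of the two generalized eigenspaces) is a square invertible matrix
(i.e. `m = n` and `G` has rank `n`) iff `T - λI` is a Browder operator with ascent at most
`p`, i.e. in addition `n = m`, `ker (T - λI)^p = ker (T - λI)^(p+1)` and
`range (T - λI)^p = range (T - λI)^(p+1)`. -/
theorem gram_square_invertible_iff_browder
    {X : Type*} [NormedAddCommGroup X] [NormedSpace ℂ X] [CompleteSpace X]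
    (T : X →L[ℂ] X) (l : ℂ) (p n m : ℕ) (hp : 0 < p) (hn : 0 < n) (hnm : n ≤ m)
    (hclosed : IsClosed (LinearMap.range (((T - l • 1) ^ p : X →L[ℂ] X) : X →ₗ[ℂ] X) : Set X))
    (e : Module.Basis (Fin n) ℂ (LinearMap.ker (((T - l • 1) ^ p : X →L[ℂ] X) : X →ₗ[ℂ] X)))
    (estar : Module.Basis (Fin m) ℂ (LinearMap.ker (((dualOp T - l • 1) ^ p : StrongDual ℂ X →L[ℂ] StrongDual ℂ X) : StrongDual ℂ X →ₗ[ℂ] StrongDual ℂ X)))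
    (G : Matrix (Fin m) (Fin n) ℂ)
    (hG : G = Matrix.of fun j i => (estar j : StrongDual ℂ X) (e i : X)) :
    (m = n ∧ G.rank = n) ↔
      (m = n ∧
        LinearMap.ker (((T - l • 1) ^ p : X →L[ℂ] X) : X →ₗ[ℂ] X) = LinearMap.ker (((T - l • 1) ^ (p + 1) : X →L[ℂ] X) : X →ₗ[ℂ] X) ∧
        LinearMap.range (((T - l • 1) ^ p : X →L[ℂ] X) : X →ₗ[ℂ] X) = LinearMap.range (((T - l • 1) ^ (p + 1) : X →L[ℂ] X) : X →ₗ[ℂ] X)) := by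
  haveI : FiniteDimensional ℂ (LinearMap.ker (((T - l • 1) ^ p : X →L[ℂ] X) : X →ₗ[ℂ] X)) :=
    Module.Finite.of_basis e
  -- the two basic Gram computations
  have Gcol : ∀ c : Fin n → ℂ, ∀ j, G.mulVec c j
      = (estar j : StrongDual ℂ X)
        (((∑ i, c i • e i : LinearMap.ker (((T - l • 1) ^ p : X →L[ℂ] X) : X →ₗ[ℂ] X))) : X) := by
    intro c j
    rw [hG]
    simp [Matrix.mulVec, dotProduct, mul_comm]
  have Grow : ∀ d : Fin m → ℂ, ∀ i, G.transpose.mulVec d i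
      = ((∑ j, d j • estar j : LinearMap.ker (((dualOp T - l • 1) ^ p : StrongDual ℂ X →L[ℂ] StrongDual ℂ X) : StrongDual ℂ X →ₗ[ℂ] StrongDual ℂ X))
          : StrongDual ℂ X) (e i : X) := by
    intro d i
    rw [hG]
    simp [Matrix.mulVec, dotProduct, Matrix.transpose, mul_comm]
  have Gsum : ∀ (d : Fin m → ℂ) (y : X),
      ((∑ j, d j • estar j : LinearMap.ker (((dualOp T - l • 1) ^ p : StrongDual ℂ X →L[ℂ] StrongDual ℂ X) : StrongDual ℂ X →ₗ[ℂ] StrongDual ℂ X))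
        : StrongDual ℂ X) y
        = ∑ j, d j * (estar j : StrongDual ℂ X) y := by
    intro d y
    simp only [AddSubmonoidClass.coe_finset_sum, SetLike.val_smul,
      ContinuousLinearMap.coe_sum', Finset.sum_apply, ContinuousLinearMap.coe_smul',
      Pi.smul_apply, smul_eq_mul]
  -- estar elements kill the range
  have hestarR : ∀ (j : Fin m) (y : X),
      (estar j : StrongDual ℂ X) (((T - l • 1) ^ p) y) = 0 := fun j y =>
    (mem_ker_dual_iff T l p _).mp (estar j).2 y
  constructor
  · rintro ⟨hmn, hrank⟩
    -- injectivity from columns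
    have hcol : ∀ c : Fin n → ℂ, G.mulVec c = 0 → c = 0 := by
      intro c hc
      have hker := (rank_eq_iff_ker G).mp hrank
      have hmem : c ∈ LinearMap.ker G.mulVecLin := by
        rw [LinearMap.mem_ker, Matrix.mulVecLin_apply]; exact hc
      rw [hker] at hmem; simpa using hmem
    -- injectivity from rows
    have hrow : ∀ d : Fin m → ℂ, G.transpose.mulVec d = 0 → d = 0 := by
      intro d hd
      have hrt : G.transpose.rank = m := by rw [Matrix.rank_transpose, hrank, hmn]
      have hker := (rank_eq_iff_ker G.transpose).mp hrt
      have hmem : d ∈ LinearMap.ker G.transpose.mulVecLin := by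
        rw [LinearMap.mem_ker, Matrix.mulVecLin_apply]; exact hd
      rw [hker] at hmem; simpa using hmem
    -- kernel ∩ range = 0
    have hNR : ∀ z : X, z ∈ LinearMap.ker (((T - l • 1) ^ p : X →L[ℂ] X) : X →ₗ[ℂ] X) →
        z ∈ LinearMap.range (((T - l • 1) ^ p : X →L[ℂ] X) : X →ₗ[ℂ] X) → z = 0 := by
      intro z hzN hzR
      have hc : G.mulVec (fun i => e.repr ⟨z, hzN⟩ i) = 0 := by
        funext j
        rw [Gcol]
        rw [Module.Basis.sum_repr e ⟨z, hzN⟩]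
        obtain ⟨w, hw⟩ := hzR
        show (estar j : StrongDual ℂ X) z = 0
        rw [← hw]
        exact hestarR j w
      have hc0 := hcol _ hc
      have hrepr : e.repr ⟨z, hzN⟩ = 0 := by
        ext i; exact congrFun hc0 i
      have : (⟨z, hzN⟩ : LinearMap.ker (((T - l • 1) ^ p : X →L[ℂ] X) : X →ₗ[ℂ] X)) = 0 := by
        have := e.repr.map_eq_zero_iff.mp hrepr
        exact this
      exact congrArg Subtype.val this
    -- ascent: ker S^p = ker S^(p+1)
    have hkerEq : LinearMap.ker (((T - l • 1) ^ p : X →L[ℂ] X) : X →ₗ[ℂ] X) = LinearMap.ker (((T - l • 1) ^ (p + 1) : X →L[ℂ] X) : X →ₗ[ℂ] X) := by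
      apply le_antisymm
      · intro x hx
        rw [LinearMap.mem_ker, ContinuousLinearMap.coe_coe] at hx ⊢
        rw [pow_succ', ContinuousLinearMap.mul_apply, hx, map_zero]
      · intro x hx
        rw [LinearMap.mem_ker, ContinuousLinearMap.coe_coe] at hx ⊢
        apply hNR
        · rw [LinearMap.mem_ker, ContinuousLinearMap.coe_coe]
          have h2p : (((T - l • 1) ^ p)) ((((T - l • 1) ^ p)) x)
              = (((T - l • 1) ^ (p + p))) x := by
            rw [pow_add, ContinuousLinearMap.mul_apply]
          rw [h2p]
          have hpp : p + p = (p - 1) + (p + 1) := by omega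
          rw [hpp, pow_add, ContinuousLinearMap.mul_apply, hx, map_zero]
        · exact ⟨x, rfl⟩
    -- the sup is everything
    have hsup : (LinearMap.ker (((T - l • 1) ^ p : X →L[ℂ] X) : X →ₗ[ℂ] X) ⊔ LinearMap.range (((T - l • 1) ^ p : X →L[ℂ] X) : X →ₗ[ℂ] X)
        : Submodule ℂ X) = ⊤ := by
      by_contra hne
      obtain ⟨x, hx⟩ : ∃ x, x ∉ (LinearMap.ker (((T - l • 1) ^ p : X →L[ℂ] X) : X →ₗ[ℂ] X)
          ⊔ LinearMap.range (((T - l • 1) ^ p : X →L[ℂ] X) : X →ₗ[ℂ] X) : Submodule ℂ X) := by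
        by_contra hc
        push_neg at hc
        exact hne (Submodule.eq_top_iff'.mpr hc)
      obtain ⟨f, hf0, hfx⟩ := sep_of_closed _ (isClosed_fin_sup _ _ hclosed) x hx
      have hfK : f ∈ LinearMap.ker (((dualOp T - l • 1) ^ p : StrongDual ℂ X →L[ℂ] StrongDual ℂ X) : StrongDual ℂ X →ₗ[ℂ] StrongDual ℂ X) := by
        rw [mem_ker_dual_iff]
        intro y
        exact hf0 _ (Submodule.mem_sup_right ⟨y, rfl⟩)
      have hd : G.transpose.mulVec (fun j => estar.repr ⟨f, hfK⟩ j) = 0 := by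
        funext i
        rw [Grow]
        rw [Module.Basis.sum_repr estar ⟨f, hfK⟩]
        exact hf0 _ (Submodule.mem_sup_left (e i).2)
      have hd0 := hrow _ hd
      have hrepr : estar.repr ⟨f, hfK⟩ = 0 := by
        ext j; exact congrFun hd0 j
      have hf00 : (⟨f, hfK⟩ : LinearMap.ker (((dualOp T - l • 1) ^ p : StrongDual ℂ X →L[ℂ] StrongDual ℂ X) : StrongDual ℂ X →ₗ[ℂ] StrongDual ℂ X)) = 0 :=
        estar.repr.map_eq_zero_iff.mp hrepr
      have : f = 0 := congrArg Subtype.val hf00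
      rw [this] at hfx
      simp at hfx
    -- range equality
    have hrangeEq : LinearMap.range (((T - l • 1) ^ p : X →L[ℂ] X) : X →ₗ[ℂ] X)
        = LinearMap.range (((T - l • 1) ^ (p + 1) : X →L[ℂ] X) : X →ₗ[ℂ] X) := by
      apply le_antisymm
      · rintro z ⟨x, rfl⟩
        have hxmem : x ∈ (LinearMap.ker (((T - l • 1) ^ p : X →L[ℂ] X) : X →ₗ[ℂ] X)
            ⊔ LinearMap.range (((T - l • 1) ^ p : X →L[ℂ] X) : X →ₗ[ℂ] X) : Submodule ℂ X) := by
          rw [hsup]; trivial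
        obtain ⟨u, hu, v, hv, huv⟩ := Submodule.mem_sup.mp hxmem
        obtain ⟨w, hw⟩ := hv
        rw [ContinuousLinearMap.coe_coe] at hw
        refine ⟨((T - l • 1) ^ (p - 1)) w, ?_⟩
        rw [LinearMap.mem_ker, ContinuousLinearMap.coe_coe] at hu
        have h1 : (((T - l • 1) ^ (p + 1))) ((((T - l • 1) ^ (p - 1))) w)
            = (((T - l • 1) ^ ((p + 1) + (p - 1)))) w :=
          (pow_add_apply' (T - l • 1) (p + 1) (p - 1) w).symm
        have hpp : (p + 1) + (p - 1) = p + p := by omega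
        simp only [ContinuousLinearMap.coe_coe]
        rw [h1, hpp]
        calc (((T - l • 1) ^ (p + p))) w
            = (((T - l • 1) ^ p)) ((((T - l • 1) ^ p)) w) := by
              rw [pow_add, ContinuousLinearMap.mul_apply]
          _ = (((T - l • 1) ^ p)) v := by rw [hw]
          _ = (((T - l • 1) ^ p)) (u + v) := by
              rw [map_add, hu, zero_add]
          _ = (((T - l • 1) ^ p)) x := by rw [huv]
      · rintro z ⟨x, rfl⟩
        refine ⟨(T - l • 1) x, ?_⟩
        simp only [ContinuousLinearMap.coe_coe]
        rw [pow_succ, ContinuousLinearMap.mul_apply]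
    exact ⟨hmn, hkerEq, hrangeEq⟩
  · rintro ⟨hmn, hkerEq, -⟩
    refine ⟨hmn, ?_⟩
    rw [rank_eq_iff_ker]
    rw [eq_bot_iff]
    intro c hc
    rw [LinearMap.mem_ker, Matrix.mulVecLin_apply] at hc
    have hxj : ∀ j, (estar j : StrongDual ℂ X)
        (((∑ i, c i • e i : LinearMap.ker (((T - l • 1) ^ p : X →L[ℂ] X) : X →ₗ[ℂ] X))) : X) = 0 := by
      intro j
      rw [← Gcol, hc]
      rfl
    set x : LinearMap.ker (((T - l • 1) ^ p : X →L[ℂ] X) : X →ₗ[ℂ] X) := ∑ i, c i • e i with hxdef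
    have hxR : (x : X) ∈ LinearMap.range (((T - l • 1) ^ p : X →L[ℂ] X) : X →ₗ[ℂ] X) := by
      by_contra hxR
      obtain ⟨f, hf0, hfx⟩ := sep_of_closed _ hclosed (x : X) hxR
      have hfK : f ∈ LinearMap.ker (((dualOp T - l • 1) ^ p : StrongDual ℂ X →L[ℂ] StrongDual ℂ X) : StrongDual ℂ X →ₗ[ℂ] StrongDual ℂ X) := by
        rw [mem_ker_dual_iff]
        intro y
        exact hf0 _ ⟨y, rfl⟩
      have h2 : (((⟨f, hfK⟩ : LinearMap.ker (((dualOp T - l • 1) ^ p : StrongDual ℂ X →L[ℂ] StrongDual ℂ X) : StrongDual ℂ X →ₗ[ℂ] StrongDual ℂ X))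
          : StrongDual ℂ X)) (x : X) = 0 := by
        rw [← Module.Basis.sum_repr estar ⟨f, hfK⟩, Gsum]
        exact Finset.sum_eq_zero fun j _ => by rw [hxj j, mul_zero]
      exact hfx h2
    have hx0 : (x : X) = 0 := by
      obtain ⟨w, hw⟩ := hxR
      rw [ContinuousLinearMap.coe_coe] at hw
      have hw2p : w ∈ LinearMap.ker (((T - l • 1) ^ (p + p) : X →L[ℂ] X) : X →ₗ[ℂ] X) := by
        rw [LinearMap.mem_ker, ContinuousLinearMap.coe_coe, pow_add, ContinuousLinearMap.mul_apply, hw]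
        exact x.2
      rw [ker_pow_stable (T - l • 1) p hkerEq p] at hw2p
      rw [LinearMap.mem_ker, ContinuousLinearMap.coe_coe] at hw2p
      rw [← hw, hw2p]
    have hxx : x = 0 := Subtype.ext hx0
    have hci : ∀ i, c i = 0 := by
      have hli := Fintype.linearIndependent_iff.mp e.linearIndependent c
      have hsum0 : ∑ i, c i • e i = 0 := by rw [← hxdef]; exact hxx
      exact hli hsum0
    have : c = 0 := funext hci
    simp [this]
end

section
/- Let X be a complex Banach space, T a bounded linear operator on X, and λ an eigenvalue of T such that (T − λI)^p has closed range, 0 < dim ker((T − λI)^p) = n ≤ m = dim ker((T* − λI)^p) < ∞, and ker((T − λI)^p) = ker((T − λI)^{p+1}) (finite ascent p). Let A ∈ ℂ^{n×m} be the Moore–Penrose left inverse of the Gram matrix G (so A·G = I_n). Then the finite-rank operator P defined by Px = Σ_{i=1}^{n} Σ_{j=1}^{m} a_{ij} e*_j(x) e_i is a continuous projection of X onto the closed subspace ker((T − λI)^p). -/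
/-- Let `λ` be an eigenvalue of `T` such that `(T - λI)^p` has closed
range, `0 < dim ker (T - λI)^p = n ≤ m = dim ker (T* - λI)^p < ∞`, and
`ker (T - λI)^p = ker (T - λI)^(p+1)` (finite ascent).  If `A ∈ ℂ^{n×m}` is the
Moore–Penrose left inverse of the Gram matrix `G` (so `A * G = 1`), then the finite-rank
operator `P x = Σᵢ Σⱼ aᵢⱼ e*ⱼ(x) eᵢ` is a continuous projection of `X` onto the closed
subspace `ker (T - λI)^p`. -/
theorem projection_onto_generalized_eigenspace
    {X : Type*} [NormedAddCommGroup X] [NormedSpace ℂ X] [CompleteSpace X]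
    (T : X →L[ℂ] X) (l : ℂ) (p n m : ℕ) (hp : 0 < p) (hn : 0 < n) (hnm : n ≤ m)
    (heig : LinearMap.ker ((T - l • 1 : X →L[ℂ] X) : X →ₗ[ℂ] X) ≠ ⊥)
    (hclosed : IsClosed (LinearMap.range (((T - l • 1) ^ p : X →L[ℂ] X) : X →ₗ[ℂ] X) : Set X))
    (hasc : LinearMap.ker (((T - l • 1) ^ p : X →L[ℂ] X) : X →ₗ[ℂ] X) = LinearMap.ker (((T - l • 1) ^ (p + 1) : X →L[ℂ] X) : X →ₗ[ℂ] X))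
    (e : Module.Basis (Fin n) ℂ (LinearMap.ker (((T - l • 1) ^ p : X →L[ℂ] X) : X →ₗ[ℂ] X)))
    (estar : Module.Basis (Fin m) ℂ (LinearMap.ker (((dualOp T - l • 1) ^ p : StrongDual ℂ X →L[ℂ] StrongDual ℂ X) :
      StrongDual ℂ X →ₗ[ℂ] StrongDual ℂ X)))
    (G : Matrix (Fin m) (Fin n) ℂ)
    (hG : G = Matrix.of fun j i => (estar j : StrongDual ℂ X) (e i : X))
    (A : Matrix (Fin n) (Fin m) ℂ) (hA : A * G = 1)
    (P : X →L[ℂ] X)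
    (hP : P = ∑ i : Fin n, ∑ j : Fin m,
      (A i j) • ((estar j : StrongDual ℂ X).smulRight (e i : X))) :
    P ∘L P = P ∧
    FiniteDimensional ℂ (LinearMap.range (P : X →ₗ[ℂ] X)) ∧
    LinearMap.range (P : X →ₗ[ℂ] X) = LinearMap.ker (((T - l • 1) ^ p : X →L[ℂ] X) : X →ₗ[ℂ] X) ∧
    IsClosed ((LinearMap.ker (((T - l • 1) ^ p : X →L[ℂ] X) : X →ₗ[ℂ] X) : Submodule ℂ X) : Set X) := by
  let K := LinearMap.ker (((T - l • 1) ^ p : X →L[ℂ] X) : X →ₗ[ℂ] X)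
  have hPapply : ∀ x : X, P x = ∑ i : Fin n, ∑ j : Fin m,
      A i j • ((estar j : StrongDual ℂ X) x) • (e i : X) := by
    intro x
    rw [hP]
    simp only [ContinuousLinearMap.sum_apply, ContinuousLinearMap.smul_apply,
      ContinuousLinearMap.smulRight_apply]
  have hmem : ∀ x : X, P x ∈ K := by
    intro x
    rw [hPapply]
    exact Submodule.sum_mem _ fun i _ => Submodule.sum_mem _ fun j _ =>
      Submodule.smul_mem _ _ (Submodule.smul_mem _ _ (e i).2)
  have hPe : ∀ k : Fin n, P (e k : X) = (e k : X) := by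
    intro k
    rw [hPapply]
    have h1 : ∀ i j, A i j • ((estar j : StrongDual ℂ X) (e k : X)) • (e i : X)
        = (A i j * G j k) • (e i : X) := by
      intro i j
      rw [hG, smul_smul, Matrix.of_apply]
    simp_rw [h1, ← Finset.sum_smul, ← Matrix.mul_apply, hA]
    simp [Matrix.one_apply]
  have hfix : ∀ v : K, P (v : X) = (v : X) := by
    intro v
    have hv : (v : X) = ∑ k : Fin n, e.repr v k • (e k : X) := by
      conv_lhs => rw [← e.sum_repr v]
      push_cast
      rfl
    rw [hv, map_sum]
    simp_rw [map_smul, hPe]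
  have hrange : LinearMap.range (P : X →ₗ[ℂ] X) = K := by
    apply le_antisymm
    · rintro _ ⟨x, rfl⟩
      exact hmem x
    · intro x hx
      exact ⟨x, hfix ⟨x, hx⟩⟩
  have hidem : P ∘L P = P := by
    ext x
    exact hfix ⟨P x, hmem x⟩
  have hfd : FiniteDimensional ℂ K := Module.Finite.of_basis e
  refine ⟨hidem, ?_, hrange, ?_⟩
  · rw [hrange]; exact hfd
  · exact ContinuousLinearMap.isClosed_ker _
end

section
/- Let X be a complex normed vector space, M ⊆ X a subspace with basis (e_1,…,e_n) where 0 < n < ∞, and Λ ⊆ X* a subspace of continuous linear functionals with basis (e*_1,…,e*_m), where n ≤ m < ∞. For a matrix A = (a_{ij}) ∈ ℂ^{n×m} define the operator P_A on X by P_A x = Σ_{i=1}^{n} Σ_{j=1}^{m} a_{ij} e*_j(x) e_i. Then there exists A ∈ ℂ^{n×m} such that P_A is a projection of X onto M (i.e., P_A∘P_A = P_A and range(P_A) = M) if and only if the m×n Gram matrix G with entries G_{ji} = e*_j(e_i) has full column rank n; in that case one may take A to be the Moore–Penrose left inverse of G, which satisfies A·G = I_n. -/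
/-- The operator `P_A x = Σᵢ Σⱼ aᵢⱼ e*ⱼ(x) eᵢ` built from vectors `eᵢ`, functionals `e*ⱼ`
and a coefficient matrix `A`. -/
noncomputable def projOp {X : Type*} [NormedAddCommGroup X] [NormedSpace ℂ X]
    {n m : ℕ} (e : Fin n → X) (estar : Fin m → StrongDual ℂ X)
    (A : Matrix (Fin n) (Fin m) ℂ) : X →L[ℂ] X :=
  ∑ i : Fin n, ∑ j : Fin m, (A i j) • ((estar j).smulRight (e i))

lemma projOp_apply {X : Type*} [NormedAddCommGroup X] [NormedSpace ℂ X]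
    {n m : ℕ} (e : Fin n → X) (estar : Fin m → StrongDual ℂ X)
    (A : Matrix (Fin n) (Fin m) ℂ) (x : X) :
    projOp e estar A x = ∑ i : Fin n, (∑ j : Fin m, A i j * estar j x) • e i := by
  simp [projOp, ContinuousLinearMap.sum_apply, Finset.sum_smul, smul_smul]

/-- Let `M ⊆ X` be a subspace with basis `(e₁,…,eₙ)`, `0 < n ≤ m < ∞`, and
`Λ ⊆ X*` a subspace of continuous functionals with basis `(e*₁,…,e*ₘ)`.  There exists
`A ∈ ℂ^{n×m}` making `P_A` a projection of `X` onto `M` iff the `m × n` Gram matrix `G`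
has full column rank `n`; in that case one may take `A` with `A * G = 1` (the Moore–Penrose
left inverse of `G`). -/
theorem projection_exists_iff_gram_full_column_rank
    {X : Type*} [NormedAddCommGroup X] [NormedSpace ℂ X]
    (M : Submodule ℂ X) (Λ : Submodule ℂ (StrongDual ℂ X))
    (n m : ℕ) (hn : 0 < n) (hnm : n ≤ m)
    (e : Module.Basis (Fin n) ℂ M) (estar : Module.Basis (Fin m) ℂ Λ)
    (G : Matrix (Fin m) (Fin n) ℂ)
    (hG : G = Matrix.of fun j i => (estar j : StrongDual ℂ X) (e i : X)) :
    ((∃ A : Matrix (Fin n) (Fin m) ℂ,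
        (projOp (fun i => (e i : X)) (fun j => (estar j : StrongDual ℂ X)) A) ∘L
          (projOp (fun i => (e i : X)) (fun j => (estar j : StrongDual ℂ X)) A) =
          projOp (fun i => (e i : X)) (fun j => (estar j : StrongDual ℂ X)) A ∧
        LinearMap.range
          ((projOp (fun i => (e i : X)) (fun j => (estar j : StrongDual ℂ X)) A : X →ₗ[ℂ] X)) = M)
      ↔ G.rank = n) ∧
    (G.rank = n → ∃ A : Matrix (Fin n) (Fin m) ℂ, A * G = 1 ∧
        (projOp (fun i => (e i : X)) (fun j => (estar j : StrongDual ℂ X)) A) ∘L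
          (projOp (fun i => (e i : X)) (fun j => (estar j : StrongDual ℂ X)) A) =
          projOp (fun i => (e i : X)) (fun j => (estar j : StrongDual ℂ X)) A ∧
        LinearMap.range
          ((projOp (fun i => (e i : X)) (fun j => (estar j : StrongDual ℂ X)) A : X →ₗ[ℂ] X)) = M) := by
  set eX : Fin n → X := fun i => (e i : X) with heX
  set es : Fin m → StrongDual ℂ X := fun j => (estar j : StrongDual ℂ X) with hes
  -- basic facts
  have hbasis : ∀ (A : Matrix (Fin n) (Fin m) ℂ) (k : Fin n),
      projOp eX es A (eX k) = ∑ i : Fin n, (A * G) i k • eX i := by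
    intro A k
    rw [projOp_apply]
    congr 1
    ext i
    congr 1
    rw [Matrix.mul_apply]
    simp [hG, heX, hes]
  have hli : LinearIndependent ℂ eX := by
    have := e.linearIndependent.map' M.subtype M.ker_subtype
    exact this
  have hspan : Submodule.span ℂ (Set.range eX) = M := by
    have h1 : Submodule.map M.subtype (Submodule.span ℂ (Set.range (e : Fin n → M))) = M := by
      rw [Module.Basis.span_eq, Submodule.map_top, Submodule.range_subtype]
    rw [← h1, Submodule.map_span]
    congr 1
    ext x
    simp [heX, Set.range_comp]
  have hrange_le : ∀ (A : Matrix (Fin n) (Fin m) ℂ) (x : X), projOp eX es A x ∈ M := by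
    intro A x
    rw [projOp_apply]
    exact Submodule.sum_mem _ fun i _ => Submodule.smul_mem _ _ (e i).2
  -- the key construction: if A * G = 1, then P_A is a projection onto M
  have hmain : ∀ (A : Matrix (Fin n) (Fin m) ℂ), A * G = 1 →
      projOp eX es A ∘L projOp eX es A = projOp eX es A ∧
      LinearMap.range (projOp eX es A : X →ₗ[ℂ] X) = M := by
    intro A hAG
    have hfixe : ∀ k, projOp eX es A (eX k) = eX k := by
      intro k
      rw [hbasis A k, hAG]
      simp [Matrix.one_apply]
    have hfix : ∀ y ∈ M, projOp eX es A y = y := by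
      intro y hy
      rw [← hspan] at hy
      induction hy using Submodule.span_induction with
      | mem x hx => obtain ⟨k, rfl⟩ := hx; exact hfixe k
      | zero => simp
      | add x y _ _ hx hy => simp [map_add, hx, hy]
      | smul c x _ hx => simp [map_smul, hx]
    constructor
    · ext x
      exact hfix _ (hrange_le A x)
    · apply le_antisymm
      · rintro x ⟨y, rfl⟩
        exact hrange_le A y
      · intro x hx
        exact ⟨x, hfix x hx⟩
  -- rank = n gives a left inverse A
  have hleft : G.rank = n → ∃ A : Matrix (Fin n) (Fin m) ℂ, A * G = 1 := by
    intro hrank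
    have hker : LinearMap.ker G.mulVecLin = ⊥ := by
      have h1 := LinearMap.finrank_range_add_finrank_ker G.mulVecLin
      rw [show Module.finrank ℂ (LinearMap.range G.mulVecLin) = n from hrank] at h1
      simp only [Module.finrank_pi, Fintype.card_fin] at h1
      have : Module.finrank ℂ (LinearMap.ker G.mulVecLin) = 0 := by omega
      exact Submodule.finrank_eq_zero.mp this
    obtain ⟨g, hg⟩ := LinearMap.exists_leftInverse_of_injective G.mulVecLin hker
    refine ⟨LinearMap.toMatrix' g, ?_⟩
    have : LinearMap.toMatrix' (g ∘ₗ G.mulVecLin) = LinearMap.toMatrix' (LinearMap.id (R := ℂ) (M := Fin n → ℂ)) := by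
      rw [hg]
    rwa [LinearMap.toMatrix'_comp, LinearMap.toMatrix'_id, ← Matrix.toLin'_apply',
      LinearMap.toMatrix'_toLin'] at this
  -- left inverse gives rank = n
  have hrank_of : ∀ A : Matrix (Fin n) (Fin m) ℂ, A * G = 1 → G.rank = n := by
    intro A hAG
    refine le_antisymm (G.rank_le_card_width.trans_eq (Fintype.card_fin n)) ?_
    calc n = (1 : Matrix (Fin n) (Fin n) ℂ).rank := by rw [Matrix.rank_one, Fintype.card_fin]
    _ = (A * G).rank := by rw [hAG]
    _ ≤ G.rank := Matrix.rank_mul_le_right A G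
  constructor
  · constructor
    · rintro ⟨A, hPP, hR⟩
      -- projection fixes M, so A * G = 1
      have hfix : ∀ y ∈ M, projOp eX es A y = y := by
        intro y hy
        rw [← hR] at hy
        obtain ⟨z, rfl⟩ := hy
        have := congrArg (fun f => f z) hPP
        simpa using this
      have hAG : A * G = 1 := by
        ext i k
        have h1 : ∑ i : Fin n, (A * G) i k • eX i = ∑ i : Fin n, ((1 : Matrix (Fin n) (Fin n) ℂ)) i k • eX i := by
          rw [← hbasis A k, hfix _ (e k).2]
          simp [Matrix.one_apply, heX]
        have h2 : ∑ i : Fin n, ((A * G) i k - (1 : Matrix (Fin n) (Fin n) ℂ) i k) • eX i = 0 := by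
          simp only [sub_smul, Finset.sum_sub_distrib, h1, sub_self]
        have := Fintype.linearIndependent_iff.mp hli _ h2 i
        exact sub_eq_zero.mp this
      exact hrank_of A hAG
    · intro hrank
      obtain ⟨A, hAG⟩ := hleft hrank
      exact ⟨A, hmain A hAG⟩
  · intro hrank
    obtain ⟨A, hAG⟩ := hleft hrank
    exact ⟨A, hAG, hmain A hAG⟩
end

section
/- Let X be a complex Banach space and T a bounded linear operator on X with ‖T‖ ≤ 1 such that T − I has closed range and dim ker(T − I) = dim ker(T* − I) = n < ∞ (T − I is a Weyl operator). Then the following are equivalent: (1) ker((T − I)²) = ker(T − I) and range((T − I)²) = range(T − I) (chain length one); (2) X = ker(T − I) ⊕ range(T − I); (3) the n×n Gram matrix G with entries G_{ji} = e*_j(e_i) is invertible; (4) the operator P = Φ G^{-1} Φ*, i.e., Px = Σ_{i,j} a_{ij} e*_j(x) e_i with (a_{ij}) = G^{-1}, is a projection onto ker(T − I); (5) the Cesàro means n^{-1} Σ_{k=0}^{n−1} T^k x converge to P x for every x ∈ X as n → ∞. -/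
set_option maxHeartbeats 1000000

open Filter Finset

section aux
variable {X : Type*} [NormedAddCommGroup X] [NormedSpace ℂ X] (T : X →L[ℂ] X)

lemma mem_ker_dualOp_iff (f : StrongDual ℂ X) :
    f ∈ LinearMap.ker ((dualOp T - 1 : StrongDual ℂ X →L[ℂ] StrongDual ℂ X) :
      StrongDual ℂ X →ₗ[ℂ] StrongDual ℂ X) ↔ ∀ y ∈ LinearMap.range ((T - 1 : X →L[ℂ] X) : X →ₗ[ℂ] X), f y = 0 := by
  constructor
  · rintro hf y ⟨x, rfl⟩
    have := ContinuousLinearMap.ext_iff.1 (LinearMap.mem_ker.1 hf) x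
    simp [dualOp, ContinuousLinearMap.sub_apply] at this ⊢
    simpa [sub_eq_zero] using this
  · intro h
    rw [LinearMap.mem_ker]
    ext x
    have := h ((T - 1) x) ⟨x, rfl⟩
    simp [dualOp, ContinuousLinearMap.sub_apply] at this ⊢
    simpa [sub_eq_zero] using this

lemma hb_mem_of_forall (R : Submodule ℂ X) (hR : IsClosed (R : Set X)) (x : X)
    (h : ∀ f : X →L[ℂ] ℂ, (∀ y ∈ R, f y = 0) → f x = 0) : x ∈ R := by
  by_contra hx
  haveI : IsClosed (R : Set X) := hR
  have hmk : (Submodule.Quotient.mk x : X ⧸ R) ≠ 0 := by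
    simpa [Submodule.Quotient.mk_eq_zero] using hx
  obtain ⟨g, -, hg⟩ := exists_dual_vector ℂ (Submodule.Quotient.mk x : X ⧸ R) (norm_ne_zero_iff.2 hmk)
  set mkC : X →L[ℂ] X ⧸ R :=
    LinearMap.mkContinuous R.mkQ 1 (fun y => by
      simpa using Submodule.Quotient.norm_mk_le R y)
  have := h (g.comp mkC) (fun y hy => by
    simp [mkC, LinearMap.mkContinuous_apply, (Submodule.Quotient.mk_eq_zero R).2 hy])
  rw [ContinuousLinearMap.comp_apply] at this
  have : g (Submodule.Quotient.mk x : X ⧸ R) = 0 := this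
  rw [hg] at this
  exact hmk (norm_eq_zero.1 (Complex.ofReal_eq_zero.1 this))

lemma pow_comm_apply (x : X) (i : ℕ) : T ((T ^ i) x) = (T ^ i) (T x) := by
  have h := ((Commute.refl T).pow_right i).eq
  calc T ((T ^ i) x) = (T * T ^ i) x := rfl
  _ = (T ^ i * T) x := by rw [h]
  _ = (T ^ i) (T x) := rfl

lemma sum_pow_sub (w : X) (N : ℕ) :
    ∑ k ∈ Finset.range N, (T ^ k) ((T - 1) w) = (T ^ N) w - w := by
  induction N with
  | zero => simp
  | succ N ih =>
      rw [Finset.sum_range_succ, ih]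
      have : (T ^ N) ((T - 1) w) = (T ^ (N + 1)) w - (T ^ N) w := by
        rw [ContinuousLinearMap.sub_apply, map_sub, pow_succ,
          ContinuousLinearMap.mul_apply]
        simp
      rw [this]
      abel

lemma sub_pow_mem_range (x : X) (k : ℕ) :
    x - (T ^ k) x ∈ LinearMap.range ((T - 1 : X →L[ℂ] X) : X →ₗ[ℂ] X) := by
  have h : x - (T ^ k) x = -((T ^ k) x - x) := by abel
  rw [h, ← sum_pow_sub T x k]
  refine neg_mem (Submodule.sum_mem _ fun i _ => ⟨(T ^ i) x, ?_⟩)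
  rw [ContinuousLinearMap.coe_coe, ContinuousLinearMap.sub_apply, ContinuousLinearMap.sub_apply,
    ContinuousLinearMap.one_apply, ContinuousLinearMap.one_apply, map_sub,
    pow_comm_apply]

lemma pow_apply_norm_le (hT : ‖T‖ ≤ 1) (w : X) (N : ℕ) : ‖(T ^ N) w‖ ≤ ‖w‖ := by
  induction N with
  | zero => simp
  | succ N ih =>
      have : (T ^ (N + 1)) w = T ((T ^ N) w) := by
        rw [pow_succ', ContinuousLinearMap.mul_apply]
      rw [this]
      calc ‖T ((T ^ N) w)‖ ≤ ‖T‖ * ‖(T ^ N) w‖ := T.le_opNorm _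
      _ ≤ 1 * ‖w‖ := mul_le_mul hT ih (norm_nonneg _) zero_le_one
      _ = ‖w‖ := one_mul _

lemma cesaro_range_tendsto (hT : ‖T‖ ≤ 1) (w : X) :
    Tendsto (fun N : ℕ => (N : ℂ)⁻¹ • ∑ k ∈ Finset.range N, (T ^ k) ((T - 1) w))
      atTop (nhds 0) := by
  refine squeeze_zero_norm (fun N => ?_) (tendsto_const_div_atTop_nhds_zero_nat (2 * ‖w‖))
  rw [sum_pow_sub, norm_smul]
  have h1 : ‖(T ^ N) w - w‖ ≤ 2 * ‖w‖ := by
    calc ‖(T ^ N) w - w‖ ≤ ‖(T ^ N) w‖ + ‖w‖ := norm_sub_le _ _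
    _ ≤ 2 * ‖w‖ := by linarith [pow_apply_norm_le T hT w N]
  have h2 : ‖((N : ℂ))⁻¹‖ = (N : ℝ)⁻¹ := by simp
  rw [h2, div_eq_inv_mul]
  exact mul_le_mul_of_nonneg_left h1 (by positivity)

lemma cesaro_ker_tendsto (x : X) (hx : T x = x) :
    Tendsto (fun N : ℕ => (N : ℂ)⁻¹ • ∑ k ∈ Finset.range N, (T ^ k) x)
      atTop (nhds x) := by
  have hpow : ∀ k : ℕ, (T ^ k) x = x := by
    intro k
    induction k with
    | zero => simp
    | succ k ih => rw [pow_succ', ContinuousLinearMap.mul_apply, ih, hx]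
  have h : ∀ᶠ N : ℕ in atTop, (N : ℂ)⁻¹ • ∑ k ∈ Finset.range N, (T ^ k) x = x := by
    filter_upwards [eventually_ge_atTop 1] with N hN
    have hs : ∑ k ∈ Finset.range N, (T ^ k) x = (N : ℂ) • x := by
      rw [Finset.sum_congr rfl (fun k _ => hpow k), Finset.sum_const, Finset.card_range,
        ← Nat.cast_smul_eq_nsmul ℂ]
    have hN0 : (N : ℂ) ≠ 0 := by exact_mod_cast (Nat.one_le_iff_ne_zero.1 hN)
    rw [hs, smul_smul, inv_mul_cancel₀ hN0, one_smul]
  exact Tendsto.congr' (Filter.EventuallyEq.symm h) tendsto_const_nhds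

end aux

/-- Let `T` be a contraction on a complex Banach space such that `T - I`
is a Weyl operator (closed range, `dim ker (T - I) = dim ker (T* - I) = n < ∞`).  With `G`
the Gram matrix of bases of `ker (T - I)` and `ker (T* - I)` and `P = Φ G⁻¹ Φ*`, the
following are equivalent: chain length one; `X = ker (T - I) ⊕ range (T - I)`; `G`
invertible; `P` is a projection onto `ker (T - I)`; the Cesàro means of the iterates of `T`
converge strongly to `P`. -/
theorem ergodic_tfae
    {X : Type*} [NormedAddCommGroup X] [NormedSpace ℂ X] [CompleteSpace X]
    (T : X →L[ℂ] X) (hT : ‖T‖ ≤ 1)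
    (hclosed : IsClosed (LinearMap.range ((T - 1 : X →L[ℂ] X) : X →ₗ[ℂ] X) : Set X))
    (n : ℕ)
    (e : Module.Basis (Fin n) ℂ (LinearMap.ker ((T - 1 : X →L[ℂ] X) : X →ₗ[ℂ] X)))
    (estar : Module.Basis (Fin n) ℂ (LinearMap.ker ((dualOp T - 1 : StrongDual ℂ X →L[ℂ] StrongDual ℂ X) :
      StrongDual ℂ X →ₗ[ℂ] StrongDual ℂ X)))
    (G : Matrix (Fin n) (Fin n) ℂ)
    (hG : G = Matrix.of fun j i => (estar j : StrongDual ℂ X) (e i : X))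
    (P : X →L[ℂ] X)
    (hP : P = ∑ i : Fin n, ∑ j : Fin n,
      (G⁻¹ i j) • ((estar j : StrongDual ℂ X).smulRight (e i : X))) :
    List.TFAE [
      LinearMap.ker (((T - 1) ^ 2 : X →L[ℂ] X) : X →ₗ[ℂ] X) = LinearMap.ker ((T - 1 : X →L[ℂ] X) : X →ₗ[ℂ] X) ∧
        LinearMap.range (((T - 1) ^ 2 : X →L[ℂ] X) : X →ₗ[ℂ] X) = LinearMap.range ((T - 1 : X →L[ℂ] X) : X →ₗ[ℂ] X),
      IsCompl (LinearMap.ker ((T - 1 : X →L[ℂ] X) : X →ₗ[ℂ] X)) (LinearMap.range ((T - 1 : X →L[ℂ] X) : X →ₗ[ℂ] X)),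
      IsUnit G,
      P ∘L P = P ∧ LinearMap.range (P : X →ₗ[ℂ] X) = LinearMap.ker ((T - 1 : X →L[ℂ] X) : X →ₗ[ℂ] X),
      ∀ x : X, Filter.Tendsto
        (fun N : ℕ => (N : ℂ)⁻¹ • ∑ k ∈ Finset.range N, (T ^ k) x)
        Filter.atTop (nhds (P x))] := by
  -- shared facts
  have hvanish : ∀ (j : Fin n), ∀ y ∈ LinearMap.range ((T - 1 : X →L[ℂ] X) : X →ₗ[ℂ] X),
      (estar j : StrongDual ℂ X) y = 0 :=
    fun j => (mem_ker_dualOp_iff T _).1 (estar j).2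
  have hannih : ∀ x : X, (∀ j, (estar j : StrongDual ℂ X) x = 0) →
      x ∈ LinearMap.range ((T - 1 : X →L[ℂ] X) : X →ₗ[ℂ] X) := by
    intro x hx
    refine hb_mem_of_forall _ hclosed x (fun f hf => ?_)
    set F : LinearMap.ker ((dualOp T - 1 : StrongDual ℂ X →L[ℂ] StrongDual ℂ X) :
      StrongDual ℂ X →ₗ[ℂ] StrongDual ℂ X) := ⟨f, (mem_ker_dualOp_iff T f).2 hf⟩
    have hF : f = (F : StrongDual ℂ X) := rfl
    rw [hF, ← estar.sum_repr F]
    rw [Submodule.coe_sum]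
    rw [ContinuousLinearMap.sum_apply]
    refine Finset.sum_eq_zero (fun j _ => ?_)
    rw [Submodule.coe_smul, ContinuousLinearMap.smul_apply, hx j, smul_zero]
  have hKfix : ∀ v : X, v ∈ LinearMap.ker ((T - 1 : X →L[ℂ] X) : X →ₗ[ℂ] X) → T v = v := by
    intro v hv
    have := LinearMap.mem_ker.1 hv
    rw [ContinuousLinearMap.coe_coe, ContinuousLinearMap.sub_apply, ContinuousLinearMap.one_apply, sub_eq_zero] at this
    exact this
  have hGc : ∀ (c : Fin n → ℂ) (j : Fin n),
      (estar j : StrongDual ℂ X)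
        (((∑ i, c i • e i : LinearMap.ker ((T - 1 : X →L[ℂ] X) : X →ₗ[ℂ] X))) : X) = G.mulVec c j := by
    intro c j
    rw [Submodule.coe_sum, map_sum]
    rw [Matrix.mulVec, dotProduct]
    refine Finset.sum_congr rfl (fun i _ => ?_)
    rw [Submodule.coe_smul, map_smul, hG]
    simp [mul_comm]
  have hczero : ∀ c : Fin n → ℂ, (∑ i, c i • e i : LinearMap.ker ((T - 1 : X →L[ℂ] X) : X →ₗ[ℂ] X)) = 0 → c = 0 := by
    intro c hc
    funext i
    exact (Fintype.linearIndependent_iff.1 e.linearIndependent c hc) i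
  have hPapply : ∀ x : X, P x =
      ∑ i, (∑ j, G⁻¹ i j * (estar j : StrongDual ℂ X) x) • ((e i : X)) := by
    intro x
    rw [hP]
    rw [ContinuousLinearMap.sum_apply]
    refine Finset.sum_congr rfl (fun i _ => ?_)
    rw [ContinuousLinearMap.sum_apply, Finset.sum_smul]
    refine Finset.sum_congr rfl (fun j _ => ?_)
    rw [ContinuousLinearMap.smul_apply, ContinuousLinearMap.smulRight_apply, smul_smul]
  have hPmemK : ∀ x : X, P x ∈ LinearMap.ker ((T - 1 : X →L[ℂ] X) : X →ₗ[ℂ] X) := by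
    intro x
    rw [hPapply]
    exact Submodule.sum_mem _ (fun i _ => Submodule.smul_mem _ _ (e i).2)
  have hPkills : ∀ y ∈ LinearMap.range ((T - 1 : X →L[ℂ] X) : X →ₗ[ℂ] X), P y = 0 := by
    intro y hy
    rw [hPapply]
    refine Finset.sum_eq_zero (fun i _ => ?_)
    rw [Finset.sum_eq_zero (fun j _ => by rw [hvanish j y hy, mul_zero]), zero_smul]
  have hdisjG : IsUnit G → ∀ v : LinearMap.ker ((T - 1 : X →L[ℂ] X) : X →ₗ[ℂ] X),
      (v : X) ∈ LinearMap.range ((T - 1 : X →L[ℂ] X) : X →ₗ[ℂ] X) → v = 0 := by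
    intro h3 v hv
    have hdet := (Matrix.isUnit_iff_isUnit_det G).1 h3
    set c := e.repr v with hc
    have hrepr : (∑ i, c i • e i : LinearMap.ker ((T - 1 : X →L[ℂ] X) : X →ₗ[ℂ] X)) = v := e.sum_repr v
    have hmul : G.mulVec c = 0 := by
      funext j
      rw [← hGc c j, hrepr]
      exact hvanish j _ hv
    have hc0 : (c : Fin n → ℂ) = 0 := by
      have := congrArg (fun u => G⁻¹.mulVec u) hmul
      simpa [Matrix.mulVec_mulVec, Matrix.nonsing_inv_mul G hdet] using this
    rw [← hrepr]
    rw [show (c : Fin n → ℂ) = 0 from hc0]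
    exact Finset.sum_eq_zero (fun i _ => zero_smul ℂ (e i))
  -- 1 → 3
  have h13 : (LinearMap.ker (((T - 1) ^ 2 : X →L[ℂ] X) : X →ₗ[ℂ] X) = LinearMap.ker ((T - 1 : X →L[ℂ] X) : X →ₗ[ℂ] X) ∧
        LinearMap.range (((T - 1) ^ 2 : X →L[ℂ] X) : X →ₗ[ℂ] X) = LinearMap.range ((T - 1 : X →L[ℂ] X) : X →ₗ[ℂ] X)) → IsUnit G := by
    intro h1
    rw [Matrix.isUnit_iff_isUnit_det, isUnit_iff_ne_zero]
    intro hdet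
    obtain ⟨c, hc0, hmc⟩ := (Matrix.exists_mulVec_eq_zero_iff).2 hdet
    set v : LinearMap.ker ((T - 1 : X →L[ℂ] X) : X →ₗ[ℂ] X) := ∑ i, c i • e i with hv
    have hvR : (v : X) ∈ LinearMap.range ((T - 1 : X →L[ℂ] X) : X →ₗ[ℂ] X) := by
      refine hannih _ (fun j => ?_)
      rw [hv, hGc c j, hmc]
      rfl
    obtain ⟨w, hw⟩ := hvR
    have hw2 : (((T - 1) ^ 2 : X →L[ℂ] X)) w = 0 := by
      rw [ContinuousLinearMap.coe_coe] at hw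
      rw [sq, ContinuousLinearMap.mul_apply, hw]
      exact v.2
    have hwker : w ∈ LinearMap.ker ((T - 1 : X →L[ℂ] X) : X →ₗ[ℂ] X) := h1.1 ▸ LinearMap.mem_ker.2 hw2
    have : (v : X) = 0 := by rw [← hw]; exact LinearMap.mem_ker.1 hwker
    exact hc0 (hczero c (by rwa [← hv, ← Submodule.coe_eq_zero]))
  -- 3 → 2
  have h32 : IsUnit G → IsCompl (LinearMap.ker ((T - 1 : X →L[ℂ] X) : X →ₗ[ℂ] X)) (LinearMap.range ((T - 1 : X →L[ℂ] X) : X →ₗ[ℂ] X)) := by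
    intro h3
    constructor
    · rw [Submodule.disjoint_def]
      intro v hvK hvR
      have := hdisjG h3 ⟨v, hvK⟩ hvR
      exact congrArg Subtype.val this
    · -- codisjoint via quotient dimension count
      set R := LinearMap.range ((T - 1 : X →L[ℂ] X) : X →ₗ[ℂ] X)
      set φ : X →ₗ[ℂ] (Fin n → ℂ) :=
        LinearMap.pi (fun j => ((estar j : StrongDual ℂ X) : X →ₗ[ℂ] ℂ))
      have hRφ : R ≤ LinearMap.ker φ := by
        intro y hy
        rw [LinearMap.mem_ker]
        funext j
        exact hvanish j y hy
      set φq : (X ⧸ R) →ₗ[ℂ] (Fin n → ℂ) := R.liftQ φ hRφ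
      have hφqker : LinearMap.ker φq = ⊥ := by
        rw [Submodule.ker_liftQ_eq_bot]
        intro x hx
        rw [LinearMap.mem_ker] at hx
        exact hannih x (fun j => congrFun hx j)
      have hφqinj : Function.Injective φq := LinearMap.ker_eq_bot.1 hφqker
      have : FiniteDimensional ℂ (X ⧸ R) := FiniteDimensional.of_injective φq hφqinj
      have hQle : Module.finrank ℂ (X ⧸ R) ≤ n := by
        have := LinearMap.finrank_le_finrank_of_injective hφqinj
        simpa using this
      set ψ : LinearMap.ker ((T - 1 : X →L[ℂ] X) : X →ₗ[ℂ] X) →ₗ[ℂ] (X ⧸ R) :=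
        R.mkQ.comp (LinearMap.ker ((T - 1 : X →L[ℂ] X) : X →ₗ[ℂ] X)).subtype
      have hψinj : Function.Injective ψ := by
        rw [← LinearMap.ker_eq_bot, LinearMap.ker_eq_bot']
        intro v hv
        refine hdisjG h3 v ?_
        have : R.mkQ (v : X) = 0 := hv
        rwa [Submodule.mkQ_apply, Submodule.Quotient.mk_eq_zero] at this
      have hK : FiniteDimensional ℂ (LinearMap.ker ((T - 1 : X →L[ℂ] X) : X →ₗ[ℂ] X)) :=
        Module.Basis.finiteDimensional_of_finite e
      have hKn : Module.finrank ℂ (LinearMap.ker ((T - 1 : X →L[ℂ] X) : X →ₗ[ℂ] X)) = n := by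
        rw [Module.finrank_eq_card_basis e, Fintype.card_fin]
      have hrange : LinearMap.range ψ = ⊤ := by
        refine Submodule.eq_top_of_finrank_eq ?_
        have h1 : Module.finrank ℂ (LinearMap.range ψ) = n := by
          rw [LinearMap.finrank_range_of_inj hψinj, hKn]
        have h2 : Module.finrank ℂ (LinearMap.range ψ) ≤ Module.finrank ℂ (X ⧸ R) :=
          Submodule.finrank_le _
        omega
      rw [codisjoint_iff, Submodule.eq_top_iff']
      intro x
      obtain ⟨v, hv⟩ := LinearMap.range_eq_top.1 hrange (Submodule.Quotient.mk x)
      have hxv : x - (v : X) ∈ R := by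
        have hq : R.mkQ (v : X) = R.mkQ x := hv
        rw [Submodule.mkQ_apply, Submodule.mkQ_apply, Submodule.Quotient.eq] at hq
        simpa [neg_sub] using neg_mem hq
      exact Submodule.mem_sup.2 ⟨(v : X), v.2, x - v, hxv, by abel⟩
  -- 2 → 1
  have h21 : IsCompl (LinearMap.ker ((T - 1 : X →L[ℂ] X) : X →ₗ[ℂ] X)) (LinearMap.range ((T - 1 : X →L[ℂ] X) : X →ₗ[ℂ] X)) →
      (LinearMap.ker (((T - 1) ^ 2 : X →L[ℂ] X) : X →ₗ[ℂ] X) = LinearMap.ker ((T - 1 : X →L[ℂ] X) : X →ₗ[ℂ] X) ∧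
        LinearMap.range (((T - 1) ^ 2 : X →L[ℂ] X) : X →ₗ[ℂ] X) = LinearMap.range ((T - 1 : X →L[ℂ] X) : X →ₗ[ℂ] X)) := by
    intro h2
    constructor
    · refine le_antisymm (fun x hx => ?_) (fun x hx => ?_)
      · rw [LinearMap.mem_ker] at hx ⊢
        rw [ContinuousLinearMap.coe_coe, sq, ContinuousLinearMap.mul_apply] at hx
        have h1 : (T - 1) x ∈ LinearMap.ker ((T - 1 : X →L[ℂ] X) : X →ₗ[ℂ] X) := LinearMap.mem_ker.2 hx
        have h2' : (T - 1) x ∈ LinearMap.range ((T - 1 : X →L[ℂ] X) : X →ₗ[ℂ] X) := ⟨x, rfl⟩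
        exact (Submodule.disjoint_def.1 h2.disjoint) _ h1 h2'
      · rw [LinearMap.mem_ker] at hx ⊢
        rw [ContinuousLinearMap.coe_coe] at hx ⊢
        rw [sq, ContinuousLinearMap.mul_apply, hx, map_zero]
    · refine le_antisymm (fun y hy => ?_) (fun y hy => ?_)
      · obtain ⟨x, rfl⟩ := hy
        rw [ContinuousLinearMap.coe_coe, sq, ContinuousLinearMap.mul_apply]
        exact ⟨(T - 1) x, rfl⟩
      · obtain ⟨x, rfl⟩ := hy
        have hx : x ∈ LinearMap.ker ((T - 1 : X →L[ℂ] X) : X →ₗ[ℂ] X) ⊔ LinearMap.range ((T - 1 : X →L[ℂ] X) : X →ₗ[ℂ] X) := by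
          rw [codisjoint_iff.1 h2.codisjoint]; trivial
        obtain ⟨k, hk, r, hr, rfl⟩ := Submodule.mem_sup.1 hx
        obtain ⟨w, rfl⟩ := hr
        refine ⟨w, ?_⟩
        simp only [ContinuousLinearMap.coe_coe]
        rw [sq, ContinuousLinearMap.mul_apply, map_add]
        rw [show (T - 1) k = 0 from LinearMap.mem_ker.1 hk, zero_add]
  -- P fixes the kernel whenever (4) holds
  have hPfix4 : (P ∘L P = P ∧ LinearMap.range (P : X →ₗ[ℂ] X) = LinearMap.ker ((T - 1 : X →L[ℂ] X) : X →ₗ[ℂ] X)) →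
      ∀ k ∈ LinearMap.ker ((T - 1 : X →L[ℂ] X) : X →ₗ[ℂ] X), P k = k := by
    rintro ⟨hPP, hPr⟩ k hk
    rw [← hPr] at hk
    obtain ⟨y, rfl⟩ := hk
    calc P (P y) = (P ∘L P) y := rfl
    _ = P y := by rw [hPP]
  -- 3 → 4
  have h34 : IsUnit G → (P ∘L P = P ∧ LinearMap.range (P : X →ₗ[ℂ] X) = LinearMap.ker ((T - 1 : X →L[ℂ] X) : X →ₗ[ℂ] X)) := by
    intro h3
    have hdet := (Matrix.isUnit_iff_isUnit_det G).1 h3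
    have hInv : G⁻¹ * G = 1 := Matrix.nonsing_inv_mul G hdet
    have hPe : ∀ k : Fin n, P ((e k : X)) = (e k : X) := by
      intro k
      rw [hPapply]
      have hcol : ∀ i, (∑ j, G⁻¹ i j * (estar j : StrongDual ℂ X) (e k : X))
          = (1 : Matrix (Fin n) (Fin n) ℂ) i k := by
        intro i
        rw [← hInv, Matrix.mul_apply]
        refine Finset.sum_congr rfl (fun j _ => ?_)
        rw [hG]
        rfl
      rw [Finset.sum_congr rfl (fun i _ => by rw [hcol i])]
      simp [Matrix.one_apply, ite_smul]
    have hPfixK : ∀ v ∈ LinearMap.ker ((T - 1 : X →L[ℂ] X) : X →ₗ[ℂ] X), P v = v := by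
      intro v hv
      have hrepr : ((∑ i, e.repr ⟨v, hv⟩ i • e i : LinearMap.ker ((T - 1 : X →L[ℂ] X) : X →ₗ[ℂ] X)) : X) = v := by
        rw [e.sum_repr ⟨v, hv⟩]
      rw [← hrepr, Submodule.coe_sum, map_sum]
      refine Finset.sum_congr rfl (fun i _ => ?_)
      rw [Submodule.coe_smul, map_smul, hPe]
    constructor
    · ext x
      exact hPfixK (P x) (hPmemK x)
    · refine le_antisymm ?_ ?_
      · rintro y ⟨x, rfl⟩
        exact hPmemK x
      · intro v hv
        exact ⟨v, hPfixK v hv⟩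
  -- 4 → 3
  have h43 : (P ∘L P = P ∧ LinearMap.range (P : X →ₗ[ℂ] X) = LinearMap.ker ((T - 1 : X →L[ℂ] X) : X →ₗ[ℂ] X)) → IsUnit G := by
    intro h4
    rw [Matrix.isUnit_iff_isUnit_det, isUnit_iff_ne_zero]
    intro hdet
    obtain ⟨c, hc0, hmc⟩ := (Matrix.exists_mulVec_eq_zero_iff).2 hdet
    set v : LinearMap.ker ((T - 1 : X →L[ℂ] X) : X →ₗ[ℂ] X) := ∑ i, c i • e i with hv
    have hPv0 : P (v : X) = 0 := by
      rw [hPapply]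
      refine Finset.sum_eq_zero (fun i _ => ?_)
      rw [Finset.sum_eq_zero (fun j _ => ?_), zero_smul]
      rw [hv, hGc c j, hmc]
      exact mul_zero _
    have hPvv : P (v : X) = (v : X) := hPfix4 h4 _ v.2
    exact hc0 (hczero c (by
      rw [← hv, ← Submodule.coe_eq_zero, ← hPvv, hPv0]))
  -- 4 → 5
  have h45 : (P ∘L P = P ∧ LinearMap.range (P : X →ₗ[ℂ] X) = LinearMap.ker ((T - 1 : X →L[ℂ] X) : X →ₗ[ℂ] X)) →
      ∀ x : X, Filter.Tendsto
        (fun N : ℕ => (N : ℂ)⁻¹ • ∑ k ∈ Finset.range N, (T ^ k) x)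
        Filter.atTop (nhds (P x)) := by
    intro h4 x
    have h2 := h32 (h43 h4)
    have hx : x ∈ LinearMap.ker ((T - 1 : X →L[ℂ] X) : X →ₗ[ℂ] X) ⊔ LinearMap.range ((T - 1 : X →L[ℂ] X) : X →ₗ[ℂ] X) := by
      rw [codisjoint_iff.1 h2.codisjoint]; trivial
    obtain ⟨k, hk, r, hr, rfl⟩ := Submodule.mem_sup.1 hx
    obtain ⟨w, rfl⟩ := hr
    simp only [ContinuousLinearMap.coe_coe]
    have hPx : P (k + (T - 1) w) = k := by
      rw [map_add, hPfix4 h4 k hk, hPkills ((T - 1) w) ⟨w, rfl⟩, add_zero]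
    rw [hPx]
    have htend := (cesaro_ker_tendsto T k (hKfix k hk)).add (cesaro_range_tendsto T hT w)
    rw [add_zero] at htend
    refine htend.congr (fun N => ?_)
    rw [← smul_add, ← Finset.sum_add_distrib]
    congr 1
    refine Finset.sum_congr rfl (fun i _ => ?_)
    rw [← map_add]
  -- 5 → 2
  have h52 : (∀ x : X, Filter.Tendsto
        (fun N : ℕ => (N : ℂ)⁻¹ • ∑ k ∈ Finset.range N, (T ^ k) x)
        Filter.atTop (nhds (P x))) →
      IsCompl (LinearMap.ker ((T - 1 : X →L[ℂ] X) : X →ₗ[ℂ] X)) (LinearMap.range ((T - 1 : X →L[ℂ] X) : X →ₗ[ℂ] X)) := by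
    intro h5
    constructor
    · rw [Submodule.disjoint_def]
      intro v hvK hvR
      obtain ⟨w, rfl⟩ := hvR
      exact tendsto_nhds_unique
        (cesaro_ker_tendsto T _ (hKfix _ hvK)) (cesaro_range_tendsto T hT w)
    · rw [codisjoint_iff, Submodule.eq_top_iff']
      intro x
      have hA := h5 x
      -- P x is a fixed point of T
      have key : ∀ N : ℕ, T ((N : ℂ)⁻¹ • ∑ k ∈ Finset.range N, (T ^ k) x) =
          ((N : ℂ)⁻¹ • ∑ k ∈ Finset.range N, (T ^ k) x) +
          ((N : ℂ)⁻¹ • ∑ k ∈ Finset.range N, (T ^ k) ((T - 1) x)) := by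
        intro N
        rw [map_smul, map_sum, ← smul_add, ← Finset.sum_add_distrib]
        congr 1
        refine Finset.sum_congr rfl (fun i _ => ?_)
        rw [pow_comm_apply]
        rw [ContinuousLinearMap.sub_apply, ContinuousLinearMap.one_apply, map_sub]
        abel
      have hTA : Filter.Tendsto (fun N : ℕ => T ((N : ℂ)⁻¹ • ∑ k ∈ Finset.range N, (T ^ k) x))
          Filter.atTop (nhds (T (P x))) := (T.continuous.tendsto (P x)).comp hA
      have hTA' : Filter.Tendsto (fun N : ℕ => T ((N : ℂ)⁻¹ • ∑ k ∈ Finset.range N, (T ^ k) x))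
          Filter.atTop (nhds (P x)) := by
        have := hA.add (cesaro_range_tendsto T hT x)
        rw [add_zero] at this
        exact this.congr (fun N => (key N).symm)
      have hfix : T (P x) = P x := tendsto_nhds_unique hTA hTA'
      have hPxK : P x ∈ LinearMap.ker ((T - 1 : X →L[ℂ] X) : X →ₗ[ℂ] X) := by
        rw [LinearMap.mem_ker, ContinuousLinearMap.coe_coe, ContinuousLinearMap.sub_apply, ContinuousLinearMap.one_apply,
          hfix, sub_self]
      have hsub : Filter.Tendsto
          (fun N : ℕ => x - ((N : ℂ)⁻¹ • ∑ k ∈ Finset.range N, (T ^ k) x))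
          Filter.atTop (nhds (x - P x)) := tendsto_const_nhds.sub hA
      have hmem : ∀ᶠ N : ℕ in Filter.atTop,
          x - ((N : ℂ)⁻¹ • ∑ k ∈ Finset.range N, (T ^ k) x) ∈ LinearMap.range ((T - 1 : X →L[ℂ] X) : X →ₗ[ℂ] X) := by
        filter_upwards [Filter.eventually_ge_atTop 1] with N hN
        have hN0 : (N : ℂ) ≠ 0 := by exact_mod_cast (Nat.one_le_iff_ne_zero.1 hN)
        have heq : x - ((N : ℂ)⁻¹ • ∑ k ∈ Finset.range N, (T ^ k) x) =
            (N : ℂ)⁻¹ • ∑ k ∈ Finset.range N, (x - (T ^ k) x) := by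
          rw [Finset.sum_sub_distrib, Finset.sum_const, Finset.card_range,
            ← Nat.cast_smul_eq_nsmul ℂ, smul_sub, smul_smul, inv_mul_cancel₀ hN0, one_smul]
        rw [heq]
        exact Submodule.smul_mem _ _ (Submodule.sum_mem _ (fun k _ => sub_pow_mem_range T x k))
      have hxR : x - P x ∈ LinearMap.range ((T - 1 : X →L[ℂ] X) : X →ₗ[ℂ] X) := hclosed.mem_of_tendsto hsub hmem
      exact Submodule.mem_sup.2 ⟨P x, hPxK, x - P x, hxR, by abel⟩
  tfae_finish
end

section
/- Let X be a complex Banach space, T a bounded linear operator on X, and λ an eigenvalue of T such that T − λI is a Browder operator (closed range, dim ker(T − λI) = dim ker(T* − λI) < ∞, and finite equal ascent and descent). Then T − λI has ascent one (ker((T − λI)²) = ker(T − λI)) if and only if there exists a finite-rank continuous projection P on X with range(P) = ker(T − λI) satisfying T∘P = P∘T = λP. -/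
/-- Let `λ` be an eigenvalue of `T` such that `T - λI` is a Browder
operator (closed range, equal finite nullity and deficiency, finite equal ascent and
descent).  Then `T - λI` has ascent one iff there is a finite-rank continuous projection
`P` with range `ker (T - λI)` satisfying `T ∘ P = P ∘ T = λ P`. -/
theorem ascent_one_iff_projection
    {X : Type*} [NormedAddCommGroup X] [NormedSpace ℂ X] [CompleteSpace X]
    (T : X →L[ℂ] X) (l : ℂ)
    (heig : LinearMap.ker ((T - l • 1 : X →L[ℂ] X) : X →ₗ[ℂ] X) ≠ ⊥)
    (hclosed : IsClosed (LinearMap.range ((T - l • 1 : X →L[ℂ] X) : X →ₗ[ℂ] X) : Set X))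
    (hfin : FiniteDimensional ℂ (LinearMap.ker ((T - l • 1 : X →L[ℂ] X) : X →ₗ[ℂ] X)))
    (hfin' : FiniteDimensional ℂ (LinearMap.ker ((dualOp T - l • 1 : StrongDual ℂ X →L[ℂ] StrongDual ℂ X) :
        StrongDual ℂ X →ₗ[ℂ] StrongDual ℂ X)))
    (hdim : Module.finrank ℂ (LinearMap.ker ((T - l • 1 : X →L[ℂ] X) : X →ₗ[ℂ] X)) =
      Module.finrank ℂ (LinearMap.ker ((dualOp T - l • 1 : StrongDual ℂ X →L[ℂ] StrongDual ℂ X) :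
        StrongDual ℂ X →ₗ[ℂ] StrongDual ℂ X)))
    (hchain : ∃ p : ℕ, 0 < p ∧
      LinearMap.ker (((T - l • 1) ^ p : X →L[ℂ] X) : X →ₗ[ℂ] X) = LinearMap.ker (((T - l • 1) ^ (p + 1) : X →L[ℂ] X) : X →ₗ[ℂ] X) ∧
      LinearMap.range (((T - l • 1) ^ p : X →L[ℂ] X) : X →ₗ[ℂ] X) = LinearMap.range (((T - l • 1) ^ (p + 1) : X →L[ℂ] X) : X →ₗ[ℂ] X)) :
    LinearMap.ker (((T - l • 1) ^ 2 : X →L[ℂ] X) : X →ₗ[ℂ] X) = LinearMap.ker ((T - l • 1 : X →L[ℂ] X) : X →ₗ[ℂ] X) ↔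
      ∃ P : X →L[ℂ] X, P ∘L P = P ∧ FiniteDimensional ℂ (LinearMap.range (P : X →ₗ[ℂ] X)) ∧
        LinearMap.range (P : X →ₗ[ℂ] X) = LinearMap.ker ((T - l • 1 : X →L[ℂ] X) : X →ₗ[ℂ] X) ∧
        T ∘L P = l • P ∧ P ∘L T = l • P := by
  set S := T - l • 1 with hS
  have hSapp : ∀ x, S x = T x - l • x := by
    intro x; simp [hS, ContinuousLinearMap.sub_apply]
  have hcomm : ∀ (n : ℕ) (x : X), (S ^ n) (S x) = S ((S ^ n) x) := by
    intro n x
    rw [← ContinuousLinearMap.mul_apply, ← pow_succ, pow_succ',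
      ContinuousLinearMap.mul_apply]
  constructor
  · intro h2
    obtain ⟨p, hp0, -, hrange⟩ := hchain
    -- kernels stabilize at 1
    have hkn : ∀ n : ℕ, 1 ≤ n → LinearMap.ker ((S ^ n : X →L[ℂ] X) : X →ₗ[ℂ] X) = LinearMap.ker (S : X →ₗ[ℂ] X) := by
      intro n hn
      induction n with
      | zero => omega
      | succ m ih =>
        rcases Nat.eq_or_lt_of_le hn with h1 | h1
        · simp [← h1, pow_one]
        · have hm : 1 ≤ m := by omega
          have ihm := ih hm
          apply le_antisymm
          · intro x hx
            have hx' : (S ^ m) (S x) = 0 := by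
              have h0 : (S ^ (m + 1)) x = 0 := hx
              rw [pow_succ, ContinuousLinearMap.mul_apply] at h0
              exact h0
            have hSx : S x ∈ LinearMap.ker (S : X →ₗ[ℂ] X) := by
              rw [← ihm]; exact hx'
            have hx2 : x ∈ LinearMap.ker ((S ^ 2 : X →L[ℂ] X) : X →ₗ[ℂ] X) := by
              have hSSx : S (S x) = 0 := hSx
              show (S ^ 2) x = 0
              rw [pow_two, ContinuousLinearMap.mul_apply]
              exact hSSx
            rw [h2] at hx2
            exact hx2
          · intro x hx
            show (S ^ (m + 1)) x = 0
            rw [pow_succ, ContinuousLinearMap.mul_apply]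
            have : S x = 0 := hx
            rw [this, map_zero]
    -- ranges stabilize at p
    have hrn : ∀ k : ℕ, LinearMap.range ((S ^ (p + k) : X →L[ℂ] X) : X →ₗ[ℂ] X) = LinearMap.range ((S ^ p : X →L[ℂ] X) : X →ₗ[ℂ] X) := by
      intro k
      induction k with
      | zero => rfl
      | succ m ih =>
        apply le_antisymm
        · rintro x ⟨y, rfl⟩
          rw [← ih]
          exact ⟨S y, by
            simp only [ContinuousLinearMap.coe_coe]
            rw [show p + (m + 1) = p + m + 1 from rfl, pow_succ,
              ContinuousLinearMap.mul_apply]⟩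
        · intro x hx
          rw [hrange] at hx
          obtain ⟨y, rfl⟩ := hx
          have h1 : (S ^ p) y ∈ LinearMap.range ((S ^ (p + m) : X →L[ℂ] X) : X →ₗ[ℂ] X) := by
            rw [ih]; exact ⟨y, rfl⟩
          obtain ⟨z, hz⟩ := h1
          refine ⟨z, ?_⟩
          simp only [ContinuousLinearMap.coe_coe] at hz ⊢
          rw [show p + (m + 1) = (p + m) + 1 from rfl, pow_succ',
            ContinuousLinearMap.mul_apply, hz, pow_succ',
            ContinuousLinearMap.mul_apply]
    -- the complementarity
    have hdisj : Disjoint (LinearMap.ker (S : X →ₗ[ℂ] X)) (LinearMap.range (S : X →ₗ[ℂ] X)) := by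
      rw [Submodule.disjoint_def]
      rintro x hxk ⟨y, rfl⟩
      have hy : y ∈ LinearMap.ker ((S ^ 2 : X →L[ℂ] X) : X →ₗ[ℂ] X) := by
        show (S ^ 2) y = 0
        rw [pow_two, ContinuousLinearMap.mul_apply]
        exact hxk
      rw [h2] at hy
      have : S y = 0 := hy
      exact this
    have hcodis : LinearMap.ker (S : X →ₗ[ℂ] X) ⊔ LinearMap.range (S : X →ₗ[ℂ] X) = ⊤ := by
      rw [Submodule.eq_top_iff']
      intro x
      have hx : (S ^ p) x ∈ LinearMap.range ((S ^ (p + p) : X →L[ℂ] X) : X →ₗ[ℂ] X) := by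
        rw [hrn p]; exact ⟨x, rfl⟩
      obtain ⟨y, hy⟩ := hx
      have hk : x - (S ^ p) y ∈ LinearMap.ker (S : X →ₗ[ℂ] X) := by
        rw [← hkn p hp0]
        show (S ^ p) (x - (S ^ p) y) = 0
        simp only [ContinuousLinearMap.coe_coe] at hy
        rw [map_sub, ← ContinuousLinearMap.mul_apply, ← pow_add, hy, sub_self]
      have hr : (S ^ p) y ∈ LinearMap.range (S : X →ₗ[ℂ] X) := by
        obtain ⟨q, rfl⟩ : ∃ q, p = q + 1 := ⟨p - 1, (Nat.succ_pred_eq_of_pos hp0).symm⟩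
        exact ⟨(S ^ q) y, by rw [pow_succ', ContinuousLinearMap.mul_apply, ContinuousLinearMap.coe_coe]⟩
      have : x = (x - (S ^ p) y) + (S ^ p) y := by abel
      rw [this]
      exact Submodule.add_mem_sup hk hr
    have hcompl : IsCompl (LinearMap.ker (S : X →ₗ[ℂ] X)) (LinearMap.range (S : X →ₗ[ℂ] X)) :=
      ⟨hdisj, codisjoint_iff.mpr hcodis⟩
    have hclK : IsClosed ((LinearMap.ker (S : X →ₗ[ℂ] X) : Submodule ℂ X) : Set X) :=
      Submodule.closed_of_finiteDimensional _
    set Pc := (LinearMap.ker (S : X →ₗ[ℂ] X)).linearProjOfClosedCompl (LinearMap.range (S : X →ₗ[ℂ] X))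
      hcompl hclK hclosed with hPc
    set P : X →L[ℂ] X := (LinearMap.ker (S : X →ₗ[ℂ] X)).subtypeL ∘L Pc with hPdef
    have hPapp : ∀ x : X, P x =
        ((LinearMap.ker (S : X →ₗ[ℂ] X)).linearProjOfIsCompl (LinearMap.range (S : X →ₗ[ℂ] X)) hcompl x : X) := by
      intro x
      simp [hPdef, hPc]
      rfl
    have hPker : ∀ x, x ∈ LinearMap.ker (S : X →ₗ[ℂ] X) → P x = x := by
      intro x hx
      rw [hPapp]
      have := Submodule.linearProjOfIsCompl_apply_left hcompl ⟨x, hx⟩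
      rw [Submodule.coe_mk] at this ⊢
      exact congrArg Subtype.val this
    have hPrange0 : ∀ x, x ∈ LinearMap.range (S : X →ₗ[ℂ] X) → P x = 0 := by
      intro x hx
      rw [hPapp]
      have := Submodule.linearProjOfIsCompl_apply_right hcompl ⟨x, hx⟩
      rw [Submodule.coe_mk] at this
      exact congrArg Subtype.val this
    have hPmem : ∀ x : X, P x ∈ LinearMap.ker (S : X →ₗ[ℂ] X) := by
      intro x; rw [hPapp]; exact Submodule.coe_mem _
    have hrangeP : LinearMap.range (P : X →ₗ[ℂ] X) = LinearMap.ker (S : X →ₗ[ℂ] X) := by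
      apply le_antisymm
      · rintro x ⟨y, rfl⟩; exact hPmem y
      · intro x hx; exact ⟨x, hPker x hx⟩
    refine ⟨P, ?_, ?_, hrangeP, ?_, ?_⟩
    · ext x
      exact hPker (P x) (hPmem x)
    · rw [hrangeP]; exact hfin
    · ext x
      have h0 : S (P x) = 0 := hPmem x
      rw [hSapp] at h0
      have : T (P x) = l • P x := sub_eq_zero.mp h0
      simpa [ContinuousLinearMap.comp_apply] using this
    · ext x
      have hTx : T x = S x + l • x := by rw [hSapp]; abel
      simp only [ContinuousLinearMap.comp_apply, ContinuousLinearMap.smul_apply]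
      rw [hTx, map_add, hPrange0 (S x) ⟨x, rfl⟩, map_smul, zero_add]
  · rintro ⟨P, hPP, -, hrangeP, hTP, hPT⟩
    apply le_antisymm
    · intro x hx
      have hSx : S (S x) = 0 := by
        have h0 : (S ^ 2) x = 0 := hx
        rw [pow_two, ContinuousLinearMap.mul_apply] at h0
        exact h0
      have hmem : S x ∈ LinearMap.range (P : X →ₗ[ℂ] X) := by
        rw [hrangeP]; exact hSx
      obtain ⟨w, hw⟩ := hmem
      have hPT' : ∀ y, P (T y) = l • P y := by
        intro y
        have := congrArg (fun f : X →L[ℂ] X => f y) hPT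
        simpa using this
      have hPS : P (S x) = 0 := by
        rw [hSapp, map_sub, map_smul, hPT', sub_self]
      have hPfix : P (S x) = S x := by
        rw [← hw]
        have := congrArg (fun f : X →L[ℂ] X => f w) hPP
        simpa using this
      show S x = 0
      rw [← hPfix, hPS]
    · intro x hx
      show (S ^ 2) x = 0
      have h0 : S x = 0 := hx
      rw [pow_two, ContinuousLinearMap.mul_apply, h0, map_zero]
end
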